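/- arXiv:2101.09111 — 15 statements merged into one kernel-verified Lean document; each statement's English description precedes it below -/
import Mathlib

section
/- A non-connected interval graph is uniquely orderable if and only if it has at most two connected components, each of which is a complete graph. -/
open Set

variable {V : Type*}

/-- An interval representation of a graph `E` over a linear order `L`. -/
def IsIntervalRep {V : Type*} {L : Type} [LinearOrder L] (E : V → V → Prop)
    (fL fR : V → L) : Prop :=
  (∀ v, fL v ≤ fR v) ∧ ∀ u v, E u v ↔ (fL u ≤ fR v ∧ fL v ≤ fR u)

/-- `E` is a (reflexive, symmetric) interval graph. -/
def IsIntervalGraph {V : Type*} (E : V → V → Prop) : Prop :=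
  (∀ v, E v v) ∧ (∀ u v, E u v → E v u) ∧
    ∃ (L : Type) (_ : LinearOrder L) (fL fR : V → L), IsIntervalRep E fL fR

/-- `p 0, …, p n` is a path in `E`. -/
def IsPath {V : Type*} (E : V → V → Prop) (p : ℕ → V) (n : ℕ) : Prop :=
  ∀ i < n, E (p i) (p (i + 1))

/-- A minimal path: no chords. -/
def IsMinimalPath {V : Type*} (E : V → V → Prop) (p : ℕ → V) (n : ℕ) : Prop :=
  IsPath E p n ∧ ∀ i j, i + 1 < j → j ≤ n → ¬ E (p i) (p j)

/-- Two vertices are connected by a path. -/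
def Reach {V : Type*} (E : V → V → Prop) (u v : V) : Prop :=
  ∃ (n : ℕ) (p : ℕ → V), IsPath E p n ∧ p 0 = u ∧ p n = v

def Connected {V : Type*} (E : V → V → Prop) : Prop := ∀ u v, Reach E u v

/-- `r` is a strict partial order associated to the graph `E` (i.e. `E` is the
incomparability graph of `r`). -/
def IsAssociated {V : Type*} (E r : V → V → Prop) : Prop :=
  (∀ v, ¬ r v v) ∧ (∀ a b c, r a b → r b c → r a c) ∧
    ∀ u v, ¬ E u v ↔ (r u v ∨ r v u)

/-- `E` is uniquely orderable: it has an associated partial order, unique up to duality. -/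
def UniquelyOrderable {V : Type*} (E : V → V → Prop) : Prop :=
  ∃ r, IsAssociated E r ∧ ∀ r', IsAssociated E r' → r' = r ∨ r' = flip r

def Kset {V : Type*} (E : V → V → Prop) (B : Set V) : Set V := {v | ∀ b ∈ B, E v b}

def Rset {V : Type*} (E : V → V → Prop) (B : Set V) : Set V :=
  {v | v ∉ B ∧ v ∉ Kset E B}

/-- `B` is a buried subgraph of `E`. -/
def Buried {V : Type*} (E : V → V → Prop) (B : Set V) : Prop :=
  (∃ a ∈ B, ∃ b ∈ B, ¬ E a b) ∧ (∀ b ∈ B, b ∉ Kset E B) ∧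
    (Rset E B).Nonempty ∧ ∀ b ∈ B, ∀ r ∈ Rset E B, ¬ E b r

/-- The set `W` of non-adjacent ordered pairs. -/
def Wset {V : Type*} (E : V → V → Prop) : Set (V × V) := {p | ¬ E p.1 p.2}

/-- The relation `Q` on pairs. -/
def Qrel {V : Type*} (E : V → V → Prop) (p q : V × V) : Prop :=
  E p.1 q.1 ∧ E p.2 q.2

/-- `p` and `q` are connected by a `Q`-path inside `W`. -/
def QReach {V : Type*} (E : V → V → Prop) (p q : V × V) : Prop :=
  ∃ (n : ℕ) (c : ℕ → V × V), c 0 = p ∧ c n = q ∧ (∀ i ≤ n, c i ∈ Wset E) ∧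
    ∀ i < n, Qrel E (c i) (c (i + 1))

/-- The sets `B_n(v,u)` of the standard construction. -/
def Bfam {V : Type*} (E : V → V → Prop) (v u : V) : ℕ → Set V
  | 0 => {v, u}
  | n + 1 => {w | ∃ z ∈ Bfam E v u n, ∃ z' ∈ Bfam E v u n, E z w ∧ ¬ E z' w}

/-- `B(v,u) = ⋃ n, B_n(v,u)`. -/
def Bset {V : Type*} (E : V → V → Prop) (v u : V) : Set V := ⋃ n, Bfam E v u n

/-- The least `n` with `w ∈ B_n(v,u)`. -/
noncomputable def eLevel {V : Type*} (E : V → V → Prop) (v u w : V) : ℕ :=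
  sInf {n | w ∈ Bfam E v u n}
section Helpers

variable {E r : V → V → Prop}

lemma reach_refl (E : V → V → Prop) (u : V) : Reach E u u :=
  ⟨0, fun _ => u, fun i hi => absurd hi (Nat.not_lt_zero i), rfl, rfl⟩

lemma reach_of_edge {u v : V} (h : E u v) : Reach E u v := by
  refine ⟨1, fun i => if i = 0 then u else v, ?_, by simp, by simp⟩
  intro i hi
  interval_cases i
  simpa using h

lemma reach_symm (hs : ∀ u v, E u v → E v u) {u v : V} : Reach E u v → Reach E v u := by
  rintro ⟨n, p, hp, h0, hn⟩
  refine ⟨n, fun i => p (n - i), ?_, by simp [hn], by simp [h0]⟩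
  intro i hi
  show E (p (n - i)) (p (n - (i + 1)))
  have h1 : n - i = (n - (i + 1)) + 1 := by omega
  rw [h1]
  exact hs _ _ (hp (n - (i + 1)) (by omega))

lemma reach_trans {u v w : V} : Reach E u v → Reach E v w → Reach E u w := by
  rintro ⟨n, p, hp, hp0, hpn⟩ ⟨m, q, hq, hq0, hqm⟩
  refine ⟨n + m, fun i => if i ≤ n then p i else q (i - n), ?_, ?_, ?_⟩
  · intro i hi
    dsimp only
    by_cases h1 : i + 1 ≤ n
    · rw [if_pos (by omega : i ≤ n), if_pos h1]
      exact hp i (by omega)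
    · by_cases h2 : i ≤ n
      · have hin : i = n := by omega
        have h3 : n + 1 - n = 1 := by omega
        rw [if_pos h2, if_neg h1, hin, h3, hpn, ← hq0]
        exact hq 0 (by omega)
      · have h3 : i + 1 - n = (i - n) + 1 := by omega
        rw [if_neg h2, if_neg h1, h3]
        exact hq (i - n) (by omega)
  · dsimp only
    rw [if_pos (Nat.zero_le n), hp0]
  · dsimp only
    by_cases hm : m = 0
    · subst hm
      rw [if_pos (by omega : n + 0 ≤ n)]
      have h4 : n + 0 = n := by omega
      rw [h4, hpn, ← hq0]
      exact hqm
    · have h3 : n + m - n = m := by omega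
      rw [if_neg (by omega : ¬ n + m ≤ n), h3]
      exact hqm

lemma propagate (hr : IsAssociated E r) {p : ℕ → V} {n : ℕ} (hp : IsPath E p n)
    {y : V} (hny : ∀ i ≤ n, ¬ E (p i) y) :
    (r (p 0) y → r (p n) y) ∧ (r y (p 0) → r y (p n)) := by
  induction n with
  | zero => exact ⟨id, id⟩
  | succ n ih =>
    have hp' : IsPath E p n := fun i hi => hp i (by omega)
    have hny' : ∀ i ≤ n, ¬ E (p i) y := fun i hi => hny i (by omega)
    obtain ⟨ih1, ih2⟩ := ih hp' hny'
    have hcomp := (hr.2.2 (p (n + 1)) y).mp (hny (n + 1) le_rfl)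
    constructor
    · intro h0
      have hn := ih1 h0
      rcases hcomp with h | h
      · exact h
      · exact absurd (hp n (by omega))
          ((hr.2.2 (p n) (p (n + 1))).mpr (Or.inl (hr.2.1 _ _ _ hn h)))
    · intro h0
      have hn := ih2 h0
      rcases hcomp with h | h
      · exact absurd (hp n (by omega))
          ((hr.2.2 (p n) (p (n + 1))).mpr (Or.inr (hr.2.1 _ _ _ h hn)))
      · exact h

def flipOn (U : Set V) (r : V → V → Prop) : V → V → Prop :=
  fun u v => (u ∈ U ∧ v ∈ U ∧ r v u) ∨ (¬ (u ∈ U ∧ v ∈ U) ∧ r u v)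

lemma flipOn_pos {U : Set V} {u v : V} (hu : u ∈ U) (hv : v ∈ U) :
    flipOn U r u v ↔ r v u := by simp [flipOn, hu, hv]

lemma flipOn_neg {U : Set V} {u v : V} (h : ¬ (u ∈ U ∧ v ∈ U)) :
    flipOn U r u v ↔ r u v := by
  simp only [flipOn]; tauto

lemma flipAssoc (hr : IsAssociated E r) (U : Set V)
    (hb : ∀ y ∉ U, (∀ x ∈ U, r x y) ∨ (∀ x ∈ U, r y x)) :
    IsAssociated E (flipOn U r) := by
  obtain ⟨hirr, htr, hinc⟩ := hr
  refine ⟨?_, ?_, ?_⟩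
  · intro v
    by_cases h : v ∈ U
    · rw [flipOn_pos h h]; exact hirr v
    · rw [flipOn_neg (fun hc => h hc.1)]; exact hirr v
  · intro a b c hab hbc
    by_cases ha : a ∈ U <;> by_cases hbm : b ∈ U <;> by_cases hc : c ∈ U
    · rw [flipOn_pos ha hbm] at hab; rw [flipOn_pos hbm hc] at hbc
      rw [flipOn_pos ha hc]; exact htr _ _ _ hbc hab
    · rw [flipOn_pos ha hbm] at hab; rw [flipOn_neg (fun h => hc h.2)] at hbc
      rw [flipOn_neg (fun h => hc h.2)]
      rcases hb c hc with h | h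
      · exact h a ha
      · exact absurd (htr _ _ _ hbc (h b hbm)) (hirr b)
    · rw [flipOn_neg (fun h => hbm h.2)] at hab
      rw [flipOn_neg (fun h => hbm h.1)] at hbc
      rcases hb b hbm with h | h
      · exact absurd (htr _ _ _ hbc (h c hc)) (hirr b)
      · exact absurd (htr _ _ _ hab (h a ha)) (hirr a)
    · rw [flipOn_neg (fun h => hbm h.2)] at hab
      rw [flipOn_neg (fun h => hbm h.1)] at hbc
      rw [flipOn_neg (fun h => hc h.2)]
      exact htr _ _ _ hab hbc
    · rw [flipOn_neg (fun h => ha h.1)] at hab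
      rw [flipOn_pos hbm hc] at hbc
      rw [flipOn_neg (fun h => ha h.1)]
      rcases hb a ha with h | h
      · exact absurd (htr _ _ _ hab (h b hbm)) (hirr a)
      · exact h c hc
    · rw [flipOn_neg (fun h => ha h.1)] at hab
      rw [flipOn_neg (fun h => hc h.2)] at hbc
      rw [flipOn_neg (fun h => ha h.1)]
      exact htr _ _ _ hab hbc
    · rw [flipOn_neg (fun h => ha h.1)] at hab
      rw [flipOn_neg (fun h => hbm h.1)] at hbc
      rw [flipOn_neg (fun h => ha h.1)]
      exact htr _ _ _ hab hbc
    · rw [flipOn_neg (fun h => ha h.1)] at hab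
      rw [flipOn_neg (fun h => hbm h.1)] at hbc
      rw [flipOn_neg (fun h => ha h.1)]
      exact htr _ _ _ hab hbc
  · intro u v
    by_cases hu : u ∈ U <;> by_cases hv : v ∈ U
    · rw [flipOn_pos hu hv, flipOn_pos hv hu, or_comm]; exact hinc u v
    · rw [flipOn_neg (fun h => hv h.2), flipOn_neg (fun h => hv h.1)]; exact hinc u v
    · rw [flipOn_neg (fun h => hu h.1), flipOn_neg (fun h => hu h.2)]; exact hinc u v
    · rw [flipOn_neg (fun h => hu h.1), flipOn_neg (fun h => hu h.2)]; exact hinc u v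

lemma unique_key (hsym : ∀ u v, E u v → E v u)
    (h1 : ∀ u v, Reach E u v → E u v)
    (h2 : ∀ u v w : V, Reach E u v ∨ Reach E u w ∨ Reach E v w)
    {u0 v0 : V} (h00 : ¬ Reach E u0 v0)
    {r' : V → V → Prop} (hr' : IsAssociated E r') (hbase : r' u0 v0) :
    ∀ a b, r' a b ↔ (Reach E a u0 ∧ Reach E b v0) := by
  have claim : ∀ a b, Reach E a u0 → Reach E b v0 → r' a b := by
    intro a b hau hbv
    have hEau : E a u0 := h1 a u0 hau
    have hEbv : E b v0 := h1 b v0 hbv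
    have hnab : ¬ E a b := by
      intro h
      exact h00 (reach_trans (reach_symm hsym hau)
        (reach_trans (reach_of_edge h) hbv))
    rcases (hr'.2.2 a b).mp hnab with h | h
    · exact h
    · have hnub : ¬ E u0 b := fun hE => h00 (reach_trans (reach_of_edge hE) hbv)
      rcases (hr'.2.2 u0 b).mp hnub with h' | h'
      · exact absurd (hsym a u0 hEau)
          ((hr'.2.2 u0 a).mpr (Or.inl (hr'.2.1 _ _ _ h' h)))
      · exact absurd hEbv
          ((hr'.2.2 b v0).mpr (Or.inl (hr'.2.1 _ _ _ h' hbase)))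
  intro a b
  constructor
  · intro hab
    have hnab : ¬ E a b := (hr'.2.2 a b).mpr (Or.inl hab)
    have hnR : ¬ Reach E a b := fun h => hnab (h1 a b h)
    have hcases : (Reach E a u0 ∧ Reach E b v0) ∨ (Reach E b u0 ∧ Reach E a v0) := by
      rcases h2 a b u0 with h | h | h
      · exact absurd h hnR
      · rcases h2 a b v0 with h' | h' | h'
        · exact absurd h' hnR
        · exact absurd (reach_trans (reach_symm hsym h) h') h00
        · exact Or.inl ⟨h, h'⟩
      · rcases h2 a b v0 with h' | h' | h'
        · exact absurd h' hnR
        · exact Or.inr ⟨h, h'⟩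
        · exact absurd (reach_trans (reach_symm hsym h) h') h00
    rcases hcases with h | ⟨hbu, hav⟩
    · exact h
    · exact absurd (hr'.2.1 a b a hab (claim b a hbu hav)) (hr'.1 a)
  · rintro ⟨ha, hb⟩; exact claim a b ha hb

end Helpers
/-- A non-connected interval graph is uniquely orderable iff it has
at most two connected components, each of which is complete. -/
theorem stmt0 {V : Type*} (E : V → V → Prop) (hIG : IsIntervalGraph E)
    (hnc : ∃ u v : V, ¬ Reach E u v) :
    UniquelyOrderable E ↔
      ((∀ u v, Reach E u v → E u v) ∧
        ∀ u v w : V, Reach E u v ∨ Reach E u w ∨ Reach E v w) := by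
  have hsym : ∀ u v, E u v → E v u := hIG.2.1
  constructor
  · rintro ⟨r, hr, huniq⟩
    -- Step 1: every component is complete
    have hcomp : ∀ u v, Reach E u v → E u v := by
      by_contra hno
      push_neg at hno
      obtain ⟨a, a', haa', hne⟩ := hno
      set A : Set V := {x | Reach E x a} with hA
      have hbex : ∃ b, b ∉ A := by
        by_contra hball
        push_neg at hball
        obtain ⟨u, v, huv⟩ := hnc
        exact huv (reach_trans (hball u) (reach_symm hsym (hball v)))
      obtain ⟨b, hb⟩ := hbex
      have haA : a ∈ A := reach_refl E a
      have ha'A : a' ∈ A := reach_symm hsym haa'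
      have hcrossE : ∀ x ∈ A, ∀ y ∉ A, ¬ E x y := fun x hx y hy hexy =>
        hy (reach_trans (reach_symm hsym (reach_of_edge hexy)) hx)
      have hbU : ∀ y ∉ A, (∀ x ∈ A, r x y) ∨ (∀ x ∈ A, r y x) := by
        intro y hy
        by_contra hcon
        push_neg at hcon
        obtain ⟨⟨x, hx, hnxy⟩, x', hx', hnyx'⟩ := hcon
        have h2 : r x' y :=
          ((hr.2.2 x' y).mp (hcrossE x' hx' y hy)).resolve_right hnyx'
        obtain ⟨n, p, hp, h0, hn⟩ : Reach E x' x :=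
          reach_trans hx' (reach_symm hsym hx)
        have hmem : ∀ i ≤ n, p i ∈ A := by
          intro i hi
          have : Reach E x' (p i) := ⟨i, p, fun j hj => hp j (by omega), h0, rfl⟩
          exact reach_trans (reach_symm hsym this) hx'
        have hnyP : ∀ i ≤ n, ¬ E (p i) y := fun i hi =>
          hcrossE _ (hmem i hi) y hy
        have hprop := (propagate hr hp hnyP).1
        rw [h0, hn] at hprop
        exact hnxy (hprop h2)
      have hr' := flipAssoc hr A hbU
      have hor := (hr.2.2 a a').mp hne
      rcases huniq _ hr' with heq | heq
      · have key := (congrFun (congrFun heq a) a').to_iff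
        rw [flipOn_pos haA ha'A] at key
        rcases hor with h | h
        · exact hr.1 a (hr.2.1 a a' a h (key.mpr h))
        · exact hr.1 a (hr.2.1 a a' a (key.mp h) h)
      · have hnab : ¬ E a b := hcrossE a haA b hb
        have key := (congrFun (congrFun heq a) b).to_iff
        rw [flipOn_neg (fun h => hb h.2)] at key
        rcases (hr.2.2 a b).mp hnab with h | h
        · exact hr.1 a (hr.2.1 a b a h (key.mp h))
        · exact hr.1 a (hr.2.1 a b a (key.mpr h) h)
    refine ⟨hcomp, ?_⟩
    -- Step 2: at most two components
    by_contra hcon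
    push_neg at hcon
    obtain ⟨u, v, w, huv, huw, hvw⟩ := hcon
    have hnE : ∀ {x y : V}, ¬ Reach E x y → ¬ E x y := fun h hE =>
      h (reach_of_edge hE)
    obtain ⟨z, s, t, hsz, htz, hst, hsz', htz'⟩ :
        ∃ z s t, r s z ∧ r t z ∧ ¬ Reach E s t ∧ ¬ Reach E s z ∧ ¬ Reach E t z := by
      rcases (hr.2.2 u v).mp (hnE huv) with h1 | h1 <;>
        rcases (hr.2.2 u w).mp (hnE huw) with h2 | h2 <;>
          rcases (hr.2.2 v w).mp (hnE hvw) with h3 | h3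
      · exact ⟨w, u, v, h2, h3, huv, huw, hvw⟩
      · exact ⟨v, u, w, h1, h3, huw, huv, fun h => hvw (reach_symm hsym h)⟩
      · exact absurd (hr.2.1 v w v h3 (hr.2.1 w u v h2 h1)) (hr.1 v)
      · exact ⟨v, u, w, h1, h3, huw, huv, fun h => hvw (reach_symm hsym h)⟩
      · exact ⟨w, u, v, h2, h3, huv, huw, hvw⟩
      · exact absurd (hr.2.1 v u v h1 (hr.2.1 u w v h2 h3)) (hr.1 v)
      · exact ⟨u, v, w, h1, h2, hvw, fun h => huv (reach_symm hsym h),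
          fun h => huw (reach_symm hsym h)⟩
      · exact ⟨u, v, w, h1, h2, hvw, fun h => huv (reach_symm hsym h),
          fun h => huw (reach_symm hsym h)⟩
    set U : Set V := {x | r x z} with hU
    have hsU : s ∈ U := hsz
    have htU : t ∈ U := htz
    have hzU : z ∉ U := fun h => hr.1 z h
    have hUclosed : ∀ x ∈ U, ∀ y, E x y → y ∈ U := by
      intro x hx y hE
      obtain ⟨n, p, hp, h0, hn⟩ : Reach E x y := reach_of_edge hE
      have hmem : ∀ i ≤ n, Reach E x (p i) := fun i hi =>
        ⟨i, p, fun j hj => hp j (by omega), h0, rfl⟩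
      have hnz : ∀ i ≤ n, ¬ E (p i) z := by
        intro i hi hE2
        have hxz : E x z := hcomp x z (reach_trans (hmem i hi) (reach_of_edge hE2))
        exact (hr.2.2 x z).mpr (Or.inl hx) hxz
      have hprop := (propagate hr hp hnz).1
      rw [h0, hn] at hprop
      exact hprop hx
    have hbU : ∀ y ∉ U, (∀ x ∈ U, r x y) ∨ (∀ x ∈ U, r y x) := by
      intro y hy
      left
      intro x hx
      have hnxy : ¬ E x y := fun hE => hy (hUclosed x hx y hE)
      rcases (hr.2.2 x y).mp hnxy with h | h
      · exact h
      · exact absurd (hr.2.1 y x z h hx) hy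
    have hr' := flipAssoc hr U hbU
    rcases huniq _ hr' with heq | heq
    · have key := (congrFun (congrFun heq s) t).to_iff
      rw [flipOn_pos hsU htU] at key
      rcases (hr.2.2 s t).mp (hnE hst) with h | h
      · exact hr.1 s (hr.2.1 s t s h (key.mpr h))
      · exact hr.1 s (hr.2.1 s t s (key.mp h) h)
    · have key := (congrFun (congrFun heq s) z).to_iff
      rw [flipOn_neg (fun h => hzU h.2)] at key
      exact hr.1 s (hr.2.1 s z s hsz (key.mp hsz))
  · rintro ⟨h1, h2⟩
    obtain ⟨u0, v0, h00⟩ := hnc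
    refine ⟨fun a b => Reach E a u0 ∧ Reach E b v0, ⟨?_, ?_, ?_⟩, ?_⟩
    · rintro x ⟨ha, hb⟩
      exact h00 (reach_trans (reach_symm hsym ha) hb)
    · rintro a b c ⟨ha, _⟩ ⟨_, hc⟩
      exact ⟨ha, hc⟩
    · intro a b
      constructor
      · intro hne
        have hnR : ¬ Reach E a b := fun h => hne (h1 a b h)
        rcases h2 a b u0 with h | h | h
        · exact absurd h hnR
        · rcases h2 a b v0 with h' | h' | h'
          · exact absurd h' hnR
          · exact absurd (reach_trans (reach_symm hsym h) h') h00
          · exact Or.inl ⟨h, h'⟩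
        · rcases h2 a b v0 with h' | h' | h'
          · exact absurd h' hnR
          · exact Or.inr ⟨h, h'⟩
          · exact absurd (reach_trans (reach_symm hsym h) h') h00
      · rintro (⟨ha, hb⟩ | ⟨hb, ha⟩) hE
        · exact h00 (reach_trans (reach_symm hsym ha)
            (reach_trans (reach_of_edge hE) hb))
        · exact h00 (reach_trans (reach_symm hsym hb)
            (reach_trans (reach_symm hsym (reach_of_edge hE)) ha))
    · intro r' hr'
      have hnE00 : ¬ E u0 v0 := fun h => h00 (reach_of_edge h)
      rcases (hr'.2.2 u0 v0).mp hnE00 with hb | hb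
      · left
        funext a b
        exact propext (unique_key hsym h1 h2 h00 hr' hb a b)
      · right
        funext a b
        have h00' : ¬ Reach E v0 u0 := fun h => h00 (reach_symm hsym h)
        have key := unique_key hsym h1 h2 h00' hr' hb a b
        exact propext (key.trans (by exact and_comm))
end

section
/- Let (V,E) be an interval graph with representation F (mapping vertices to intervals of a linear order L). If v_0 E v_1 E ... E v_n is a path and w ∈ V satisfies F(w) ⊀ F(v_0) and F(v_n) ⊀ F(w) (where F(x) < F(y) means the interval F(x) lies entirely before F(y)), then there exists i ≤ n with v_i E w. -/
open Set

variable {V : Type*}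

theorem stmt1 {V : Type*} {L : Type} [LinearOrder L] (E : V → V → Prop)
    (fL fR : V → L) (hrep : IsIntervalRep E fL fR)
    (p : ℕ → V) (n : ℕ) (hp : IsPath E p n) (w : V)
    (h0 : ¬ fR w < fL (p 0)) (hn : ¬ fR (p n) < fL w) :
    ∃ i ≤ n, E (p i) w := by
  classical
  obtain ⟨hle, hE⟩ := hrep
  have hSn : fL w ≤ fR (p n) := not_lt.mp hn
  have hex : ∃ i, fL w ≤ fR (p i) ∧ i ≤ n := ⟨n, hSn, le_rfl⟩
  obtain ⟨i, ⟨hi1, hi2⟩, hmin⟩ : ∃ i, (fL w ≤ fR (p i) ∧ i ≤ n) ∧ ∀ m, (fL w ≤ fR (p m) ∧ m ≤ n) → i ≤ m :=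
    ⟨Nat.find hex, Nat.find_spec hex, fun m hm => Nat.find_le hm⟩
  refine ⟨i, hi2, ?_⟩
  rw [hE]
  refine ⟨?_, hi1⟩
  match i, hi1, hi2, hmin with
  | 0, hi1, hi2, _ => exact not_lt.mp h0
  | (k+1), hi1, hi2, hmin =>
    have hk : ¬ (fL w ≤ fR (p k) ∧ k ≤ n) := fun h => by
      have := hmin k h; omega
    have hk' : fR (p k) < fL w := by
      by_contra h
      exact hk ⟨not_lt.mp h, by omega⟩
    have hadj := (hE (p k) (p (k+1))).mp (hp k (by omega))
    exact le_trans hadj.2 (le_trans hk'.le (hle w))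
end

section
/- Let (V,E) be an interval graph with representation (L,<,f_L,f_R) and let v_0 E ... E v_n be a minimal path with F(v_0) < F(v_n). Then f_R(v_i) < f_R(v_{i+1}) for each i < n−1, and f_L(v_j) < f_L(v_{j+1}) for each j with 0 < j < n. -/
open Set

variable {V : Type*}

theorem stmt3 {V : Type*} {L : Type} [LinearOrder L] (E : V → V → Prop)
    (fL fR : V → L) (hrep : IsIntervalRep E fL fR)
    (p : ℕ → V) (n : ℕ) (hp : IsMinimalPath E p n)
    (hfirst : fR (p 0) < fL (p n)) :
    (∀ i, i < n - 1 → fR (p i) < fR (p (i + 1))) ∧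
      ∀ j, 0 < j → j < n → fL (p j) < fL (p (j + 1)) := by
  obtain ⟨hle, hE⟩ := hrep
  obtain ⟨hpath, hmin⟩ := hp
  have adj : ∀ i, i < n → fL (p i) ≤ fR (p (i+1)) ∧ fL (p (i+1)) ≤ fR (p i) := by
    intro i hi
    exact (hE _ _).mp (hpath i hi)
  have dich : ∀ i, i + 2 ≤ n → fR (p i) < fL (p (i+2)) ∨ fR (p (i+2)) < fL (p i) := by
    intro i hi
    by_contra hc
    push_neg at hc
    exact hmin i (i+2) (by omega) hi ((hE _ _).mpr ⟨hc.2, hc.1⟩)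
  have step : ∀ i, i + 3 ≤ n →
      (fR (p i) < fL (p (i+2)) ↔ fR (p (i+1)) < fL (p (i+3))) := by
    intro i hi
    have h1 := adj i (by omega)
    have h2 := adj (i+1) (by omega)
    have h3 := adj (i+2) (by omega)
    have e1 : i + 1 + 1 = i + 2 := by omega
    have e2 : i + 2 + 1 = i + 3 := by omega
    rw [e1] at h2
    rw [e2] at h3
    constructor
    · intro hO
      rcases dich (i+1) (by omega) with h | h
      · have e : i + 1 + 2 = i + 3 := by omega
        rwa [e] at h
      · exfalso
        have e : i + 1 + 2 = i + 3 := by omega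
        rw [e] at h
        have : fR (p i) < fR (p i) := calc
          fR (p i) < fL (p (i+2)) := hO
          _ ≤ fR (p (i+3)) := h3.1
          _ < fL (p (i+1)) := h
          _ ≤ fR (p i) := h1.2
        exact lt_irrefl _ this
    · intro hO
      rcases dich i (by omega) with h | h
      · exact h
      · exfalso
        have : fL (p i) < fL (p i) := calc
          fL (p i) ≤ fR (p (i+1)) := h1.1
          _ < fL (p (i+3)) := hO
          _ ≤ fR (p (i+2)) := h3.2
          _ < fL (p i) := h
        exact lt_irrefl _ this
  have const : ∀ i, i + 2 ≤ n → (fR (p i) < fL (p (i+2)) ↔ fR (p 0) < fL (p 2)) := by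
    intro i
    induction i with
    | zero => intro _; exact Iff.rfl
    | succ k ih =>
      intro hi
      have e : k + 1 + 2 = k + 3 := by omega
      rw [e]
      exact (step k (by omega)).symm.trans (ih (by omega))
  have key : ∀ i, i + 2 ≤ n → fR (p i) < fL (p (i+2)) := by
    intro i hi
    have hn2 : 2 ≤ n := by omega
    rcases dich 0 hn2 with h0 | h0
    · exact (const i hi).mpr h0
    · exfalso
      have hO0 : ¬ (fR (p 0) < fL (p 2)) := by
        intro hc
        exact absurd (lt_of_le_of_lt (hle (p 0)) (lt_of_lt_of_le hc (le_trans (hle (p 2)) (le_of_lt h0)))) (lt_irrefl _)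
      have allneg : ∀ j, j + 2 ≤ n → fR (p (j+2)) < fL (p j) := by
        intro j hj
        rcases dich j hj with h | h
        · exact absurd ((const j hj).mp h) hO0
        · exact h
      have desc : ∀ i, i ≤ n → fL (p i) ≤ fR (p 0) := by
        intro i
        induction i using Nat.strong_induction_on with
        | _ i ih =>
          match i with
          | 0 => intro _; exact hle _
          | 1 => intro h1; exact (adj 0 (by omega)).2
          | (k+2) =>
            intro hk
            have h := allneg k (by omega)
            have hk' := ih k (by omega) (by omega)
            exact le_trans (le_of_lt (lt_of_le_of_lt (hle _) h)) hk'
      exact absurd (lt_of_lt_of_le hfirst (desc n le_rfl)) (lt_irrefl _)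
  constructor
  · intro i hi
    have hk := key i (by omega)
    have h2 := (adj (i+1) (by omega)).2
    have e : i + 1 + 1 = i + 2 := by omega
    rw [e] at h2
    exact lt_of_lt_of_le hk h2
  · intro j hj0 hjn
    obtain ⟨k, rfl⟩ : ∃ k, j = k + 1 := ⟨j - 1, by omega⟩
    have hk := key k (by omega)
    have h2 := (adj k (by omega)).2
    have e : k + 1 + 1 = k + 2 := by omega
    rw [e]
    exact lt_of_le_of_lt h2 hk
end

section
/- Let (V,E) be an interval graph with representation (L,<,f_L,f_R), let v_0 E ... E v_n be a minimal path with F(v_0) < F(v_n), and let v ∈ V with F(v) < F(v_0). Then ¬(v_i E v) for every i ≠ 1. -/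
open Set

variable {V : Type*}

theorem stmt4 {V : Type*} {L : Type} [LinearOrder L] (E : V → V → Prop)
    (fL fR : V → L) (hrep : IsIntervalRep E fL fR)
    (p : ℕ → V) (n : ℕ) (hp : IsMinimalPath E p n)
    (hfirst : fR (p 0) < fL (p n)) (v : V) (hv : fR v < fL (p 0)) :
    ∀ i ≤ n, i ≠ 1 → ¬ E (p i) v := by
  intro i hin hi1 hE
  obtain ⟨hle, hadj⟩ := hrep
  rcases Nat.eq_zero_or_pos i with hi0 | hipos
  · subst hi0
    have := (hadj (p 0) v).mp hE
    exact absurd this.1 (not_le.mpr hv)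
  have hi2 : 2 ≤ i := by omega
  -- fL (p i) ≤ fR (p 0)
  have hstart : fL (p i) ≤ fR (p 0) :=
    le_trans ((hadj (p i) v).mp hE).1 (le_of_lt (lt_of_lt_of_le hv (hle (p 0))))
  have hex : ∃ j, i ≤ j ∧ j ≤ n ∧ fR (p 0) ≤ fR (p j) := by
    refine ⟨n, hin, le_rfl, le_trans (le_of_lt hfirst) (hle (p n))⟩
  classical
  set j := Nat.find hex with hj
  obtain ⟨hji, hjn, hjR⟩ := Nat.find_spec hex
  have hjL : fL (p j) ≤ fR (p 0) := by
    rcases eq_or_lt_of_le hji with heq | hlt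
    · rw [hj, ← heq]; exact hstart
    · have hm : ¬ (i ≤ j - 1 ∧ j - 1 ≤ n ∧ fR (p 0) ≤ fR (p (j - 1))) :=
        Nat.find_min hex (by omega)
      have hRlt : fR (p (j - 1)) < fR (p 0) := by
        by_contra hc
        exact hm ⟨by omega, by omega, not_lt.mp hc⟩
      have hedge : E (p (j - 1)) (p ((j - 1) + 1)) := hp.1 (j - 1) (by omega)
      have : (j - 1) + 1 = j := by omega
      rw [this] at hedge
      have := (hadj (p (j - 1)) (p j)).mp hedge
      exact le_of_lt (lt_of_le_of_lt this.2 hRlt)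
  have hchord : E (p 0) (p j) :=
    (hadj (p 0) (p j)).mpr ⟨le_trans (hle (p 0)) hjR, hjL⟩
  exact hp.2 0 j (by omega) hjn hchord
end

section
/- Let (V,E) be an interval graph (possibly infinite) and ≺ a partial order associated to (V,E). Define W = {(a,b) ∈ V × V : ¬(a E b)} and (a,b) Q (c,d) iff a E c and b E d. If (a,b), (c,d) ∈ W are connected by a Q-path in (W,Q) and a ≺ b, then c ≺ d. -/
open Set

variable {V : Type*}

/-- One Q-step preserves the orientation of the associated order. -/
lemma qstep {V : Type*} (E : V → V → Prop) (hIG : IsIntervalGraph E)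
    (r : V → V → Prop) (hr : IsAssociated E r) (p q : V × V)
    (hp : ¬ E p.1 p.2) (hq : ¬ E q.1 q.2) (hPQ : Qrel E p q)
    (h1 : r p.1 p.2) : r q.1 q.2 := by
  obtain ⟨hirr, htr, hassoc⟩ := hr
  rcases (hassoc q.1 q.2).mp hq with h | h2
  · exact h
  -- suppose r q.2 q.1 and derive a contradiction
  exfalso
  obtain ⟨hE11, hE22⟩ := hPQ
  -- E p.1 q.2
  have hE12 : E p.1 q.2 := by
    by_contra h
    rcases (hassoc p.1 q.2).mp h with h' | h'
    · exact (hassoc p.1 q.1).mpr (Or.inl (htr _ _ _ h' h2)) hE11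
    · exact (hassoc p.2 q.2).mpr (Or.inr (htr _ _ _ h' h1)) hE22
  -- E p.2 q.1
  have hE21 : E p.2 q.1 := by
    by_contra h
    rcases (hassoc p.2 q.1).mp h with h' | h'
    · exact (hassoc p.1 q.1).mpr (Or.inl (htr _ _ _ h1 h')) hE11
    · exact (hassoc p.2 q.2).mpr (Or.inr (htr _ _ _ h2 h')) hE22
  -- chordless 4-cycle contradiction via interval representation
  obtain ⟨_, _, L, _, fL, fR, hLR, hadj⟩ := hIG
  have h11 := (hadj p.1 q.1).mp hE11
  have h22 := (hadj p.2 q.2).mp hE22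
  have h12 := (hadj p.1 q.2).mp hE12
  have h21 := (hadj p.2 q.1).mp hE21
  have hpp : ¬ (fL p.1 ≤ fR p.2 ∧ fL p.2 ≤ fR p.1) := fun hc => hp ((hadj _ _).mpr hc)
  have hqq : ¬ (fL q.1 ≤ fR q.2 ∧ fL q.2 ≤ fR q.1) := fun hc => hq ((hadj _ _).mpr hc)
  rcases not_and_or.mp hpp with h | h <;> push_neg at h
  · -- fR p.2 < fL p.1
    exact hqq ⟨le_trans h21.2 (le_trans h.le h12.1),
      le_trans h22.2 (le_trans h.le h11.1)⟩
  · -- fR p.1 < fL p.2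
    exact hqq ⟨le_trans h11.2 (le_trans h.le h22.1),
      le_trans h12.2 (le_trans h.le h21.1)⟩

theorem stmt5 {V : Type*} (E : V → V → Prop) (hIG : IsIntervalGraph E)
    (r : V → V → Prop) (hr : IsAssociated E r) (a b c d : V)
    (hQ : QReach E (a, b) (c, d)) (hab : r a b) : r c d := by
  obtain ⟨n, cc, h0, hn, hW, hstep⟩ := hQ
  have key : ∀ i ≤ n, r (cc i).1 (cc i).2 := by
    intro i
    induction i with
    | zero => intro _; rw [h0]; exact hab
    | succ k ih =>
      intro hk
      exact qstep E hIG r hr (cc k) (cc (k + 1))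
        (hW k (le_of_lt hk)) (hW (k + 1) hk)
        (hstep k hk) (ih (le_of_lt hk))
  have := key n le_rfl
  rw [hn] at this
  exact this
end

section
/- Let (V,E) be an interval graph, ≺ an associated partial order, and W, Q as defined. Then for no (a,b) ∈ W is (a,b) connected to (b,a) by a Q-path in (W,Q). Consequently, if (V,E) is not complete, the graph (W,Q) has at least two connected components. -/
open Set

variable {V : Type*}

lemma flip_assoc {V : Type*} {E r : V → V → Prop} (hr : IsAssociated E r) :
    IsAssociated E (flip r) := by
  obtain ⟨h1, h2, h3⟩ := hr
  refine ⟨h1, fun a b c hab hbc => h2 _ _ _ hbc hab, fun u v => ?_⟩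
  rw [h3 u v]; unfold flip; tauto

lemma step_lemma {V : Type*} {E : V → V → Prop} (hIG : IsIntervalGraph E)
    {r : V → V → Prop} (hr : IsAssociated E r) {a b c d : V}
    (hab : ¬ E a b) (hcd : ¬ E c d) (hac : E a c) (hbd : E b d)
    (hrab : r a b) : r c d := by
  obtain ⟨hirr, htr, hinc⟩ := hr
  rcases (hinc c d).mp hcd with h | hdc
  · exact h
  exfalso
  -- derive E a d
  have had : E a d := by
    by_contra h
    rcases (hinc a d).mp h with h' | h'
    · exact (hinc a c).mpr (Or.inl (htr _ _ _ h' hdc)) hac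
    · exact (hinc b d).mpr (Or.inr (htr _ _ _ h' hrab)) hbd
  have hbc : E b c := by
    by_contra h
    rcases (hinc b c).mp h with h' | h'
    · exact (hinc a c).mpr (Or.inl (htr _ _ _ hrab h')) hac
    · exact (hinc b d).mpr (Or.inr (htr _ _ _ hdc h')) hbd
  obtain ⟨href, hsym, L, _, fL, fR, hLR, hiff⟩ := hIG
  have Hab : fR a < fL b ∨ fR b < fL a := by
    by_contra h
    push_neg at h
    exact hab ((hiff a b).mpr ⟨h.2, h.1⟩)
  have Hcd : fR c < fL d ∨ fR d < fL c := by
    by_contra h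
    push_neg at h
    exact hcd ((hiff c d).mpr ⟨h.2, h.1⟩)
  have h1 := (hiff a c).mp hac
  have h2 := (hiff b d).mp hbd
  have h3 := (hiff a d).mp had
  have h4 := (hiff b c).mp hbc
  rcases Hab with h5 | h5 <;> rcases Hcd with h6 | h6
  · exact lt_irrefl _ ((((h3.2.trans_lt h5).trans_le h4.1).trans h6))
  · exact lt_irrefl _ ((((h1.2.trans_lt h5).trans_le h2.1).trans h6))
  · exact lt_irrefl _ ((((h2.2.trans_lt h5).trans_le h1.1).trans h6))
  · exact lt_irrefl _ ((((h4.2.trans_lt h5).trans_le h3.1).trans h6))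

lemma invariant {V : Type*} {E : V → V → Prop} (hIG : IsIntervalGraph E)
    {r : V → V → Prop} (hr : IsAssociated E r) {n : ℕ} {c : ℕ → V × V}
    (hW : ∀ i ≤ n, c i ∈ Wset E) (hQ : ∀ i < n, Qrel E (c i) (c (i + 1)))
    (h0 : r (c 0).1 (c 0).2) : ∀ i ≤ n, r (c i).1 (c i).2 := by
  intro i
  induction i with
  | zero => intro _; exact h0
  | succ k ih =>
    intro hk
    have hkn : k ≤ n := Nat.le_of_succ_le hk
    have hq := hQ k hk
    exact step_lemma hIG hr (hW k hkn) (hW _ hk) hq.1 hq.2 (ih hkn)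

theorem stmt6 {V : Type*} (E : V → V → Prop) (hIG : IsIntervalGraph E)
    (r : V → V → Prop) (hr : IsAssociated E r) :
    (∀ a b : V, ¬ E a b → ¬ QReach E (a, b) (b, a)) ∧
      ((∃ a b : V, ¬ E a b) →
        ∃ p q : V × V, p ∈ Wset E ∧ q ∈ Wset E ∧ ¬ QReach E p q) := by
  have hsym := hIG.2.1
  have part1 : ∀ a b : V, ¬ E a b → ¬ QReach E (a, b) (b, a) := by
    intro a b hab ⟨n, c, h0, hn, hW, hQ⟩
    obtain ⟨hirr, htr, hinc⟩ := hr
    rcases (hinc a b).mp hab with hrab | hrba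
    · have := invariant hIG ⟨hirr, htr, hinc⟩ hW hQ (by rw [h0]; exact hrab) n le_rfl
      rw [hn] at this
      exact hirr a (htr _ _ _ hrab this)
    · have := invariant hIG (flip_assoc ⟨hirr, htr, hinc⟩) hW hQ
        (by rw [h0]; exact hrba) n le_rfl
      rw [hn] at this
      exact hirr a (htr _ _ _ this hrba)
  refine ⟨part1, fun ⟨a, b, hab⟩ => ⟨(a, b), (b, a), hab, fun h => hab (hsym _ _ h), part1 a b hab⟩⟩
end

section
/- Let (V,E) be an interval graph, W = {(a,b) : ¬(a E b)}, and Q as defined. If the graph (W,Q) has exactly two connected components, then (V,E) is uniquely orderable. -/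
open Set

variable {V : Type*}

/-- Interval graphs contain no induced 4-cycle. -/
private lemma aux_c4 {L : Type} [LinearOrder L] {E : V → V → Prop} {fL fR : V → L}
    (hrep : IsIntervalRep E fL fR) {a b c d : V}
    (hab : ¬ E a b) (hcd : ¬ E c d) (hac : E a c) (hbd : E b d)
    (had : E a d) (hbc : E b c) : False := by
  obtain ⟨_, hiff⟩ := hrep
  obtain ⟨h1, h2⟩ := (hiff a c).mp hac
  obtain ⟨h3, h4⟩ := (hiff b d).mp hbd
  obtain ⟨h5, h6⟩ := (hiff a d).mp had
  obtain ⟨h7, h8⟩ := (hiff b c).mp hbc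
  rw [hiff, not_and_or, not_le, not_le] at hab hcd
  rcases hab with hab | hab <;> rcases hcd with hcd | hcd
  · exact absurd (calc fL a ≤ fR d := h5
      _ < fL c := hcd
      _ ≤ fR b := h8
      _ < fL a := hab) (lt_irrefl _)
  · exact absurd (calc fL a ≤ fR c := h1
      _ < fL d := hcd
      _ ≤ fR b := h4
      _ < fL a := hab) (lt_irrefl _)
  · exact absurd (calc fL b ≤ fR d := h3
      _ < fL c := hcd
      _ ≤ fR a := h2
      _ < fL b := hab) (lt_irrefl _)
  · exact absurd (calc fL b ≤ fR c := h7
      _ < fL d := hcd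
      _ ≤ fR a := h6
      _ < fL b := hab) (lt_irrefl _)

private lemma aux_onlyone {E r : V → V → Prop} (hr : IsAssociated E r) {u v : V}
    (h : ¬ E u v) : r u v ↔ ¬ r v u := by
  constructor
  · intro h1 h2
    exact hr.1 u (hr.2.1 _ _ _ h1 h2)
  · intro h1
    rcases (hr.2.2 u v).mp h with h2 | h2
    · exact h2
    · exact absurd h2 h1

/-- One-step invariance of orientation along a `Q`-edge. -/
private lemma aux_qstep {L : Type} [LinearOrder L] {E : V → V → Prop} {fL fR : V → L}
    (hrep : IsIntervalRep E fL fR) {r : V → V → Prop} (hr : IsAssociated E r)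
    {a b c d : V} (hab : ¬ E a b) (hcd : ¬ E c d) (hac : E a c) (hbd : E b d)
    (h1 : r a b) : r c d := by
  rcases (hr.2.2 c d).mp hcd with h | hdc
  · exact h
  exfalso
  have had : E a d := by
    by_contra hEad
    rcases (hr.2.2 a d).mp hEad with h | h
    · exact (hr.2.2 a c).mpr (Or.inl (hr.2.1 _ _ _ h hdc)) hac
    · exact (hr.2.2 b d).mpr (Or.inr (hr.2.1 _ _ _ h h1)) hbd
  have hbc : E b c := by
    by_contra hEbc
    rcases (hr.2.2 b c).mp hEbc with h | h
    · exact (hr.2.2 a c).mpr (Or.inl (hr.2.1 _ _ _ h1 h)) hac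
    · exact (hr.2.2 b d).mpr (Or.inr (hr.2.1 _ _ _ hdc h)) hbd
  exact aux_c4 hrep hab hcd hac hbd had hbc

private lemma aux_chain_sign {L : Type} [LinearOrder L] {E : V → V → Prop} {fL fR : V → L}
    (hrep : IsIntervalRep E fL fR) (hsymm : ∀ u v, E u v → E v u)
    {r : V → V → Prop} (hr : IsAssociated E r) :
    ∀ (n : ℕ) (c : ℕ → V × V), (∀ i ≤ n, c i ∈ Wset E) →
      (∀ i < n, Qrel E (c i) (c (i + 1))) →
      (r (c 0).1 (c 0).2 ↔ r (c n).1 (c n).2) := by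
  intro n
  induction n with
  | zero => intro c _ _; rfl
  | succ n ih =>
    intro c hW hQ
    have h1 := ih c (fun i hi => hW i (hi.trans (Nat.le_succ n)))
      (fun i hi => hQ i (hi.trans (Nat.lt_succ_self n)))
    refine h1.trans ?_
    have hQ' := hQ n (Nat.lt_succ_self n)
    have hWn : ¬ E (c n).1 (c n).2 := hW n (Nat.le_succ n)
    have hWn1 : ¬ E (c (n + 1)).1 (c (n + 1)).2 := hW (n + 1) le_rfl
    constructor
    · exact fun h => aux_qstep hrep hr hWn hWn1 hQ'.1 hQ'.2 h
    · exact fun h => aux_qstep hrep hr hWn1 hWn (hsymm _ _ hQ'.1) (hsymm _ _ hQ'.2) h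

private lemma aux_reach_sign {L : Type} [LinearOrder L] {E : V → V → Prop} {fL fR : V → L}
    (hrep : IsIntervalRep E fL fR) (hsymm : ∀ u v, E u v → E v u)
    {r : V → V → Prop} (hr : IsAssociated E r) {s t : V × V}
    (h : QReach E s t) : r s.1 s.2 ↔ r t.1 t.2 := by
  obtain ⟨n, c, h0, hn, hW, hQ⟩ := h
  have := aux_chain_sign hrep hsymm hr n c hW hQ
  rwa [h0, hn] at this

/-- if (W,Q) has exactly two components then E is uniquely orderable. -/
theorem stmt7 {V : Type*} (E : V → V → Prop) (hIG : IsIntervalGraph E)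
    (htwo : ∃ p q : V × V, p ∈ Wset E ∧ q ∈ Wset E ∧ ¬ QReach E p q ∧
      ∀ s ∈ Wset E, QReach E s p ∨ QReach E s q) :
    UniquelyOrderable E := by
  classical
  obtain ⟨hrefl, hsymm, L, _inst, fL, fR, hrep⟩ := hIG
  obtain ⟨p, q, hpW, hqW, -, hcov⟩ := htwo
  have hpW' : ¬ E p.1 p.2 := hpW
  -- the canonical associated order coming from the interval representation
  have hr : IsAssociated E (fun u v => ¬ E u v ∧ fR u < fL v) := by
    refine ⟨fun v hv => hv.1 (hrefl v), ?_, ?_⟩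
    · rintro a b c ⟨hab, l1⟩ ⟨hbc, l2⟩
      have l3 : fR a < fL c := l1.trans_le ((hrep.1 b).trans l2.le)
      exact ⟨fun hE => absurd ((hrep.2 a c).mp hE).2 (not_le.mpr l3), l3⟩
    · intro u v
      constructor
      · intro hE
        rcases not_and_or.mp ((not_congr (hrep.2 u v)).mp hE) with h | h
        · exact Or.inr ⟨fun h' => hE (hsymm _ _ h'), not_le.mp h⟩
        · exact Or.inl ⟨hE, not_le.mp h⟩
      · rintro (⟨h, _⟩ | ⟨h, _⟩)
        · exact h
        · exact fun h' => h (hsymm _ _ h')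
  set r : V → V → Prop := fun u v => ¬ E u v ∧ fR u < fL v with hrdef
  refine ⟨r, hr, ?_⟩
  intro r' hr'
  -- every pair of W reaches p, either directly or after swapping
  have dich : ∀ s : V × V, s ∈ Wset E → QReach E s p ∨ QReach E s.swap p := by
    intro s hs
    rcases hcov s hs with h | h
    · exact Or.inl h
    · rcases hcov s.swap (fun hE => hs (hsymm _ _ hE)) with h' | h'
      · exact Or.inr h'
      · exfalso
        have e1 := aux_reach_sign hrep hsymm hr h
        have e2 := aux_reach_sign hrep hsymm hr h'
        simp only [Prod.fst_swap, Prod.snd_swap] at e2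
        rcases (hr.2.2 s.1 s.2).mp hs with h2 | h2
        · exact (aux_onlyone hr hs).mp h2 (e2.mpr (e1.mp h2))
        · exact (aux_onlyone hr hs).mp (e1.mpr (e2.mp h2)) h2
  have key : ∀ u v, ¬ E u v →
      ((r' u v ↔ r' p.1 p.2) ∧ (r u v ↔ r p.1 p.2)) ∨
      ((r' u v ↔ ¬ r' p.1 p.2) ∧ (r u v ↔ ¬ r p.1 p.2)) := by
    intro u v huv
    rcases dich (u, v) huv with h | h
    · exact Or.inl ⟨aux_reach_sign hrep hsymm hr' h, aux_reach_sign hrep hsymm hr h⟩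
    · right
      have e1' := aux_reach_sign hrep hsymm hr' h
      have e1 := aux_reach_sign hrep hsymm hr h
      simp only [Prod.fst_swap, Prod.snd_swap] at e1 e1'
      exact ⟨(aux_onlyone hr' huv).trans (not_congr e1'),
        (aux_onlyone hr huv).trans (not_congr e1)⟩
  by_cases hc : (r' p.1 p.2 ↔ r p.1 p.2)
  · left
    funext u v
    apply propext
    by_cases hE : E u v
    · constructor
      · intro h; exact absurd hE ((hr'.2.2 u v).mpr (Or.inl h))
      · intro h; exact absurd hE ((hr.2.2 u v).mpr (Or.inl h))
    · rcases key u v hE with ⟨e1, e2⟩ | ⟨e1, e2⟩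
      · exact e1.trans (hc.trans e2.symm)
      · exact e1.trans ((not_congr hc).trans e2.symm)
  · right
    have o1 := aux_onlyone hr hpW'
    have o2 := aux_onlyone hr' hpW'
    have horient := (hr.2.2 p.1 p.2).mp hpW'
    have horient' := (hr'.2.2 p.1 p.2).mp hpW'
    have hc2 : r' p.1 p.2 ↔ ¬ r p.1 p.2 := by tauto
    funext u v
    apply propext
    show r' u v ↔ r v u
    by_cases hE : E u v
    · constructor
      · intro h; exact absurd hE ((hr'.2.2 u v).mpr (Or.inl h))
      · intro h; exact absurd (hsymm _ _ hE) ((hr.2.2 v u).mpr (Or.inl h))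
    · have o3 := aux_onlyone hr hE
      have A : ¬ r u v ↔ r v u := by rw [o3]; exact not_not
      rcases key u v hE with ⟨e1, e2⟩ | ⟨e1, e2⟩
      · exact e1.trans (hc2.trans ((not_congr e2).symm.trans A))
      · exact e1.trans (((not_congr hc2).trans not_not).trans
          (((not_congr e2).trans not_not).symm.trans A))
end

section
/- Every uniquely orderable interval graph contains no buried subgraph. That is, if (V,E) is an interval graph with a buried subgraph B, then there exist two partial orders associated to (V,E) that are neither equal nor dual to each other. -/
open Set

variable {V : Type*}

section Aux

variable {V : Type*}

lemma assoc_of_rep {L : Type} [LinearOrder L] {E : V → V → Prop}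
    {fL fR : V → L} (h : IsIntervalRep E fL fR) :
    IsAssociated E (fun u v => fR u < fL v) := by
  obtain ⟨hle, hiff⟩ := h
  refine ⟨fun v hv => absurd (hle v) (not_le.2 hv), ?_, ?_⟩
  · intro a b c h1 h2
    exact lt_trans (lt_of_lt_of_le h1 (hle b)) h2
  · intro u v
    rw [hiff u v, not_and_or, not_le, not_le]
    tauto

open Classical in
/-- Left endpoints of the modified representation squeezing `B` to the point `t`. -/
noncomputable def modL {L M : Type} [LinearOrder L] [LinearOrder M]
    (B : Set V) (t : L) (f : V → L) (p : V → M) : V → L ×ₗ (WithBot (WithTop M)) :=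
  fun v => if v ∈ B then toLex (t, ((p v : WithTop M) : WithBot (WithTop M)))
    else toLex (f v, ⊥)

open Classical in
/-- Right endpoints of the modified representation squeezing `B` to the point `t`. -/
noncomputable def modR {L M : Type} [LinearOrder L] [LinearOrder M]
    (B : Set V) (t : L) (f : V → L) (q : V → M) : V → L ×ₗ (WithBot (WithTop M)) :=
  fun v => if v ∈ B then toLex (t, ((q v : WithTop M) : WithBot (WithTop M)))
    else toLex (f v, ⊤)

lemma mod_rep {L M : Type} [LinearOrder L] [LinearOrder M]
    {E : V → V → Prop} (hsym : ∀ u v, E u v → E v u)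
    {fL fR : V → L} (hle : ∀ v, fL v ≤ fR v)
    (hiff : ∀ u v, E u v ↔ (fL u ≤ fR v ∧ fL v ≤ fR u))
    (B : Set V) (t : L)
    (ht : ∀ u ∈ B, ∀ v ∉ B, (E u v ↔ (fL v ≤ t ∧ t ≤ fR v)))
    (p q : V → M) (hpq : ∀ v ∈ B, p v ≤ q v)
    (hEB : ∀ u ∈ B, ∀ v ∈ B, (E u v ↔ (p u ≤ q v ∧ p v ≤ q u))) :
    IsIntervalRep E (modL B t fL p) (modR B t fR q) := by
  classical
  have hcoe_le : ∀ x y : M, ((x : WithTop M) : WithBot (WithTop M)) ≤ ((y : WithTop M) : WithBot (WithTop M)) ↔ x ≤ y := by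
    intro x y
    rw [WithBot.coe_le_coe, WithTop.coe_le_coe]
  -- a mixed left-endpoint ≤ right-endpoint comparison
  have hBnot : ∀ (u v : V), u ∈ B → v ∉ B →
      ((modL B t fL p u ≤ modR B t fR q v ∧ modL B t fL p v ≤ modR B t fR q u)
        ↔ (fL v ≤ t ∧ t ≤ fR v)) := by
    intro u v hu hv
    simp only [modL, modR, if_pos hu, if_neg hv]
    rw [Prod.Lex.le_iff, Prod.Lex.le_iff]
    constructor
    · rintro ⟨h1 | ⟨h1, -⟩, h2 | ⟨h2, -⟩⟩ <;>
        exact ⟨h2.le, h1.le⟩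
    · rintro ⟨h1, h2⟩
      constructor
      · rcases lt_or_eq_of_le h2 with h | h
        · exact Or.inl h
        · exact Or.inr ⟨h, le_top⟩
      · rcases lt_or_eq_of_le h1 with h | h
        · exact Or.inl h
        · exact Or.inr ⟨h, bot_le⟩
  constructor
  · intro v
    by_cases hv : v ∈ B
    · simp only [modL, modR, if_pos hv]
      rw [Prod.Lex.le_iff]
      exact Or.inr ⟨rfl, (hcoe_le _ _).2 (hpq v hv)⟩
    · simp only [modL, modR, if_neg hv]
      rw [Prod.Lex.le_iff]
      rcases lt_or_eq_of_le (hle v) with h | h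
      · exact Or.inl h
      · exact Or.inr ⟨h, bot_le⟩
  · intro u v
    by_cases hu : u ∈ B <;> by_cases hv : v ∈ B
    · simp only [modL, modR, if_pos hu, if_pos hv]
      rw [hEB u hu v hv, Prod.Lex.le_iff, Prod.Lex.le_iff]
      simp [hcoe_le]
    · rw [ht u hu v hv]
      exact (hBnot u v hu hv).symm
    · rw [show E u v ↔ E v u from ⟨hsym u v, hsym v u⟩, ht v hv u hu]
      rw [← hBnot v u hv hu]
      tauto
    · simp only [modL, modR, if_neg hu, if_neg hv]
      rw [hiff u v, Prod.Lex.le_iff, Prod.Lex.le_iff]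
      constructor
      · rintro ⟨h1, h2⟩
        constructor
        · rcases lt_or_eq_of_le h1 with h | h
          · exact Or.inl h
          · exact Or.inr ⟨h, bot_le⟩
        · rcases lt_or_eq_of_le h2 with h | h
          · exact Or.inl h
          · exact Or.inr ⟨h, bot_le⟩
      · rintro ⟨h1 | ⟨h1, -⟩, h2 | ⟨h2, -⟩⟩ <;> exact ⟨h1.le, h2.le⟩

lemma key_lemma {L : Type} [LinearOrder L] {E : V → V → Prop}
    (hsym : ∀ u v, E u v → E v u) {fL fR : V → L}
    (hrep : IsIntervalRep E fL fR)
    {B : Set V} (hB : Buried E B) {a b : V} (ha : a ∈ B) (hb : b ∈ B)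
    (hab : fR a < fL b) :
    ∃ r₁ r₂ : V → V → Prop, IsAssociated E r₁ ∧ IsAssociated E r₂ ∧
      r₁ ≠ r₂ ∧ r₁ ≠ flip r₂ := by
  classical
  obtain ⟨hle, hiff⟩ := hrep
  obtain ⟨-, hKB, ⟨r₀, hr₀⟩, hBR⟩ := hB
  set t := fR a with htdef
  -- the key geometric fact
  have ht : ∀ u ∈ B, ∀ v ∉ B, (E u v ↔ (fL v ≤ t ∧ t ≤ fR v)) := by
    intro u hu v hv
    by_cases hvK : v ∈ Kset E B
    · have hva := hvK a ha
      have hvb := hvK b hb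
      constructor
      · intro _
        refine ⟨((hiff v a).1 hva).1, ?_⟩
        exact le_trans (le_of_lt hab) ((hiff v b).1 hvb).2
      · intro _
        exact hsym v u (hvK u hu)
    · have hvR : v ∈ Rset E B := ⟨hv, hvK⟩
      constructor
      · intro h
        exact absurd h (hBR u hu v hvR)
      · rintro ⟨h1, h2⟩
        have : E v a := (hiff v a).2 ⟨h1, le_trans (le_trans (hle a) (le_of_eq htdef)) h2⟩
        exact absurd (hsym v a this) (hBR a ha v hvR)
  have hr₀B : r₀ ∉ B := hr₀.1
  have hr₀R : r₀ ∈ Rset E B := hr₀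
  -- two representations
  have hrep₁ := mod_rep hsym hle hiff B t ht fL fR (fun v _ => hle v)
    (fun u _ v _ => hiff u v)
  have hrep₂ := mod_rep (M := Lᵒᵈ) hsym hle hiff B t ht
    (fun v => OrderDual.toDual (fR v)) (fun v => OrderDual.toDual (fL v))
    (fun v _ => hle v)
    (fun u _ v _ => by
      rw [hiff u v]
      constructor
      · rintro ⟨h1, h2⟩; exact ⟨h2, h1⟩
      · rintro ⟨h1, h2⟩; exact ⟨h2, h1⟩)
  set r₁ : V → V → Prop := fun u v => modR B t fR fR u < modL B t fL fL v with hr₁def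
  set r₂ : V → V → Prop := fun u v =>
    modR B t fR (fun v => OrderDual.toDual (fL v)) u
      < modL B t fL (fun v => OrderDual.toDual (fR v)) v with hr₂def
  have hA₁ : IsAssociated E r₁ := assoc_of_rep ⟨hrep₁.1, hrep₁.2⟩
  have hA₂ : IsAssociated E r₂ := assoc_of_rep ⟨hrep₂.1, hrep₂.2⟩
  refine ⟨r₁, r₂, hA₁, hA₂, ?_, ?_⟩
  · -- r₁ ≠ r₂ via the pair (a, b)
    have h1 : r₁ a b := by
      simp only [hr₁def, modL, modR, if_pos ha, if_pos hb]
      rw [Prod.Lex.lt_iff]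
      exact Or.inr ⟨rfl, by
        simp only [ofLex_toLex]
        rw [WithBot.coe_lt_coe, WithTop.coe_lt_coe]; exact hab⟩
    have h2 : ¬ r₂ a b := by
      simp only [hr₂def, modL, modR, if_pos ha, if_pos hb]
      rw [Prod.Lex.lt_iff]
      rintro (h | ⟨-, h⟩)
      · exact lt_irrefl t h
      · simp only [ofLex_toLex] at h
        rw [WithBot.coe_lt_coe, WithTop.coe_lt_coe] at h
        have h' : fL a ≤ fR b := le_trans (le_trans (hle a) (le_of_lt hab)) (hle b)
        exact absurd h (not_lt.2 h')
    intro h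
    rw [h] at h1
    exact h2 h1
  · -- r₁ ≠ flip r₂ via the pair (a, r₀) or (r₀, a)
    have hnot : ¬ (fL r₀ ≤ t ∧ t ≤ fR r₀) := by
      rw [← ht a ha r₀ hr₀B]
      exact hBR a ha r₀ hr₀R
    rw [not_and_or, not_le, not_le] at hnot
    rcases hnot with hcase | hcase
    · -- t < fL r₀ : both orders put a before r₀
      have h1 : r₁ a r₀ := by
        simp only [hr₁def, modL, modR, if_pos ha, if_neg hr₀B]
        rw [Prod.Lex.lt_iff]
        exact Or.inl hcase
      have h2 : r₂ a r₀ := by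
        simp only [hr₂def, modL, modR, if_pos ha, if_neg hr₀B]
        rw [Prod.Lex.lt_iff]
        exact Or.inl hcase
      intro h
      have h3 : r₂ r₀ a := by rw [h] at h1; exact h1
      exact hA₂.1 a (hA₂.2.1 a r₀ a h2 h3)
    · -- fR r₀ < t : both orders put r₀ before a
      have h1 : r₁ r₀ a := by
        simp only [hr₁def, modL, modR, if_pos ha, if_neg hr₀B]
        rw [Prod.Lex.lt_iff]
        exact Or.inl hcase
      have h2 : r₂ r₀ a := by
        simp only [hr₂def, modL, modR, if_pos ha, if_neg hr₀B]
        rw [Prod.Lex.lt_iff]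
        exact Or.inl hcase
      intro h
      have h3 : r₂ a r₀ := by rw [h] at h1; exact h1
      exact hA₂.1 a (hA₂.2.1 a r₀ a h3 h2)

end Aux

theorem stmt8 {V : Type*} (E : V → V → Prop) (hIG : IsIntervalGraph E)
    (B : Set V) (hB : Buried E B) :
    ∃ r₁ r₂ : V → V → Prop, IsAssociated E r₁ ∧ IsAssociated E r₂ ∧
      r₁ ≠ r₂ ∧ r₁ ≠ flip r₂ := by
  obtain ⟨hrefl, hsym, L, _, fL, fR, hrep⟩ := hIG
  obtain ⟨a, ha, b, hb, hab⟩ := hB.1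
  rw [hrep.2 a b, not_and_or, not_le, not_le] at hab
  rcases hab with h | h
  · exact key_lemma hsym hrep hB hb ha h
  · exact key_lemma hsym hrep hB ha hb h
end

section
/- Let (V,E) be a graph with a buried subgraph B and ≺₀ a partial order associated to (V,E) such that B is ≺₀-convex (if b ≺₀ v ≺₀ b' with b,b' ∈ B then v ∈ B). Define ≺' by: u ≺' v iff either (u,v ∈ B and v ≺₀ u) or (at least one of u,v is not in B and u ≺₀ v). Then ≺' is a partial order associated to (V,E) which is neither ≺₀ nor its dual. -/
open Set

variable {V : Type*}

theorem stmt9 {V : Type*} (E : V → V → Prop) (hrefl : ∀ v, E v v)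
    (hsymm : ∀ u v, E u v → E v u) (B : Set V) (hB : Buried E B)
    (r₀ : V → V → Prop) (hr₀ : IsAssociated E r₀)
    (hconv : ∀ b v b', b ∈ B → b' ∈ B → r₀ b v → r₀ v b' → v ∈ B)
    (r' : V → V → Prop)
    (hr' : ∀ u v, r' u v ↔
      ((u ∈ B ∧ v ∈ B ∧ r₀ v u) ∨ ((u ∉ B ∨ v ∉ B) ∧ r₀ u v))) :
    IsAssociated E r' ∧ r' ≠ r₀ ∧ r' ≠ flip r₀ := by
  obtain ⟨hirr, htrans, hinc⟩ := hr₀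
  obtain ⟨⟨a0, ha0, b0, hb0, hnab⟩, hKB, ⟨x, hxR⟩, hBR⟩ := hB
  constructor
  · refine ⟨?_, ?_, ?_⟩
    · intro v hv
      rcases (hr' v v).1 hv with ⟨_, _, h⟩ | ⟨_, h⟩ <;> exact hirr v h
    · intro a b c hab hbc
      rcases (hr' a b).1 hab with ⟨haB, hbB, h1⟩ | ⟨hor1, h1⟩
      · rcases (hr' b c).1 hbc with ⟨_, hcB, h2⟩ | ⟨hor2, h2⟩
        · exact (hr' a c).2 (Or.inl ⟨haB, hcB, htrans _ _ _ h2 h1⟩)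
        · have hcB : c ∉ B := hor2.resolve_left (fun h => h hbB)
          have hcK : c ∉ Kset E B := fun hk =>
            (hinc b c).2 (Or.inl h2) (hsymm _ _ (hk b hbB))
          have hnac : ¬ E a c := hBR a haB c ⟨hcB, hcK⟩
          rcases (hinc a c).1 hnac with h | h
          · exact (hr' a c).2 (Or.inr ⟨Or.inr hcB, h⟩)
          · exact absurd (hconv b c a hbB haB h2 h) hcB
      · rcases (hr' b c).1 hbc with ⟨hbB, hcB, h2⟩ | ⟨hor2, h2⟩
        · have haB : a ∉ B := hor1.resolve_right (fun h => h hbB)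
          have haK : a ∉ Kset E B := fun hk =>
            (hinc a b).2 (Or.inl h1) (hk b hbB)
          have hnca : ¬ E a c := fun h => hBR c hcB a ⟨haB, haK⟩ (hsymm _ _ h)
          rcases (hinc a c).1 hnca with h | h
          · exact (hr' a c).2 (Or.inr ⟨Or.inl haB, h⟩)
          · exact absurd (hconv c a b hcB hbB h h1) haB
        · refine (hr' a c).2 (Or.inr ⟨?_, htrans _ _ _ h1 h2⟩)
          by_contra hcon
          push_neg at hcon
          have hbB : b ∉ B := hor1.resolve_left (fun h => h hcon.1)
          exact hbB (hconv a b c hcon.1 hcon.2 h1 h2)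
    · intro u v
      rw [hinc u v]
      constructor
      · rintro (h | h)
        · by_cases huB : u ∈ B
          · by_cases hvB : v ∈ B
            · exact Or.inr ((hr' v u).2 (Or.inl ⟨hvB, huB, h⟩))
            · exact Or.inl ((hr' u v).2 (Or.inr ⟨Or.inr hvB, h⟩))
          · exact Or.inl ((hr' u v).2 (Or.inr ⟨Or.inl huB, h⟩))
        · by_cases huB : u ∈ B
          · by_cases hvB : v ∈ B
            · exact Or.inl ((hr' u v).2 (Or.inl ⟨huB, hvB, h⟩))
            · exact Or.inr ((hr' v u).2 (Or.inr ⟨Or.inl hvB, h⟩))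
          · exact Or.inr ((hr' v u).2 (Or.inr ⟨Or.inr huB, h⟩))
      · rintro (h | h)
        · rcases (hr' u v).1 h with ⟨_, _, h'⟩ | ⟨_, h'⟩
          · exact Or.inr h'
          · exact Or.inl h'
        · rcases (hr' v u).1 h with ⟨_, _, h'⟩ | ⟨_, h'⟩
          · exact Or.inl h'
          · exact Or.inr h'
  constructor
  · -- r' ≠ r₀
    intro heq
    have key : ∀ p q, p ∈ B → q ∈ B → r₀ p q → False := by
      intro p q hp hq hpq
      have : r' p q := heq ▸ hpq
      rcases (hr' p q).1 this with ⟨_, _, h⟩ | ⟨hor, _⟩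
      · exact hirr p (htrans _ _ _ hpq h)
      · exact hor.elim (fun h => h hp) (fun h => h hq)
    rcases (hinc a0 b0).1 hnab with h | h
    · exact key a0 b0 ha0 hb0 h
    · exact key b0 a0 hb0 ha0 h
  · -- r' ≠ flip r₀
    intro heq
    have hnbx : ¬ E a0 x := hBR a0 ha0 x hxR
    rcases (hinc a0 x).1 hnbx with h | h
    · have hr : r' a0 x := (hr' a0 x).2 (Or.inr ⟨Or.inr hxR.1, h⟩)
      rw [heq] at hr
      exact hirr a0 (htrans _ _ _ h hr)
    · have hr : r' x a0 := (hr' x a0).2 (Or.inr ⟨Or.inl hxR.1, h⟩)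
      rw [heq] at hr
      exact hirr x (htrans _ _ _ h hr)
end

section
/- Let (V,E) be a graph with a buried subgraph B, ≺₀ a partial order associated to (V,E), and b₀ ∈ B. Define ≺ by: for u,v both in B or both not in B, u ≺ v iff u ≺₀ v; for b ∈ B and v ∉ B, b ≺ v iff b₀ ≺₀ v, and v ≺ b iff v ≺₀ b₀. Then ≺ is a partial order associated to (V,E) in which B is convex (if b ≺ v ≺ b' with b,b' ∈ B then v ∈ B). -/
open Set

variable {V : Type*}

theorem stmt10 {V : Type*} (E : V → V → Prop) (hrefl : ∀ v, E v v)
    (hsymm : ∀ u v, E u v → E v u) (B : Set V) (hB : Buried E B)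
    (r₀ : V → V → Prop) (hr₀ : IsAssociated E r₀) (b₀ : V) (hb₀ : b₀ ∈ B)
    (r : V → V → Prop)
    (hr : ∀ u v, r u v ↔
      ((((u ∈ B ∧ v ∈ B) ∨ (u ∉ B ∧ v ∉ B)) ∧ r₀ u v) ∨
        (u ∈ B ∧ v ∉ B ∧ r₀ b₀ v) ∨ (u ∉ B ∧ v ∈ B ∧ r₀ u b₀))) :
    IsAssociated E r ∧
      ∀ b v b', b ∈ B → b' ∈ B → r b v → r v b' → v ∈ B := by

  obtain ⟨hirr, htrans, hcomp⟩ := hr₀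
  have hNB : ∀ v ∉ B, ∀ b ∈ B, (E v b ↔ E v b₀) := by
    intro v hv b hb
    by_cases hK : v ∈ Kset E B
    · exact ⟨fun _ => hK b₀ hb₀, fun _ => hK b hb⟩
    · have hR : v ∈ Rset E B := ⟨hv, hK⟩
      have h1 := hB.2.2.2 b hb v hR
      have h2 := hB.2.2.2 b₀ hb₀ v hR
      constructor <;> intro h
      · exact (h1 (hsymm _ _ h)).elim
      · exact (h2 (hsymm _ _ h)).elim
  have hEeq : ∀ u ∈ B, ∀ v, v ∉ B → (E u v ↔ E b₀ v) := by
    intro u hu v hv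
    constructor <;> intro h
    · exact hsymm _ _ ((hNB v hv u hu).1 (hsymm _ _ h))
    · exact hsymm _ _ ((hNB v hv u hu).2 (hsymm _ _ h))
  refine ⟨⟨?_, ?_, ?_⟩, ?_⟩
  · intro v h
    rw [hr] at h
    rcases h with ⟨_, h⟩ | ⟨h1, h2, _⟩ | ⟨h1, h2, _⟩
    · exact hirr v h
    · exact h2 h1
    · exact h1 h2
  · intro a b c hab hbc
    rw [hr] at hab hbc ⊢
    by_cases ha : a ∈ B <;> by_cases hb : b ∈ B <;> by_cases hc : c ∈ B <;>
      simp only [ha, hb, hc, not_true, not_false_iff, true_and, and_true, false_and,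
        and_false, or_false, false_or, true_or, or_true, and_self] at hab hbc ⊢ <;>
      first
        | exact htrans _ _ _ hab hbc
        | exact hab
        | exact hbc
        | exact (hirr _ (htrans _ _ _ hab hbc)).elim
  · intro u v
    rw [hr u v, hr v u]
    by_cases hu : u ∈ B <;> by_cases hv : v ∈ B <;>
      simp only [hu, hv, not_true, not_false_iff, true_and, and_true, false_and,
        and_false, or_false, false_or, and_self]
    · exact hcomp u v
    · rw [show E u v ↔ E b₀ v from hEeq u hu v hv]
      exact hcomp b₀ v
    · rw [show E u v ↔ E u b₀ from by
        have := hEeq v hv u hu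
        constructor
        · intro h; exact hsymm _ _ (this.1 (hsymm _ _ h))
        · intro h; exact hsymm _ _ (this.2 (hsymm _ _ h))]
      exact hcomp u b₀
    · exact hcomp u v
  · intro b v b' hb hb' h1 h2
    rw [hr] at h1 h2
    by_cases hv : v ∈ B
    · exact hv
    · rcases h1 with ⟨⟨_, h⟩ | ⟨h, _⟩, _⟩ | ⟨_, _, h1⟩ | ⟨h, _⟩
      · exact absurd h hv
      · exact absurd hb h
      · rcases h2 with ⟨⟨h, _⟩ | ⟨_, h⟩, _⟩ | ⟨h, _⟩ | ⟨_, _, h2⟩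
        · exact absurd h hv
        · exact absurd hb' h
        · exact absurd h hv
        · exact (hirr b₀ (htrans _ _ _ h1 h2)).elim
      · exact absurd hb h
end

section
/- Let (V,E) be a connected interval graph and v,u ∈ V with ¬(v E u). Define B₀(v,u) = {v,u} and B_{n+1}(v,u) = {w ∈ V : ∃ z,z' ∈ B_n(v,u), z E w ∧ ¬(z' E w)}, and B(v,u) = ∪_n B_n(v,u). Then B_n(v,u) ⊆ B_{n+1}(v,u) for all n, and B(v,u) is a buried subgraph if and only if R(B(v,u)) = V \ (B(v,u) ∪ K(B(v,u))) is nonempty. -/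
open Set

variable {V : Type*}

theorem stmt12 {V : Type*} (E : V → V → Prop) (hIG : IsIntervalGraph E)
    (hconn : Connected E) (v u : V) (hvu : ¬ E v u) :
    (∀ n, Bfam E v u n ⊆ Bfam E v u (n + 1)) ∧
      (Buried E (Bset E v u) ↔ (Rset E (Bset E v u)).Nonempty) := by
  obtain ⟨hrefl, hsymm, -⟩ := hIG
  have mono : ∀ n, Bfam E v u n ⊆ Bfam E v u (n + 1) := by
    intro n
    induction n with
    | zero =>
      intro w hw
      rcases hw with h | h
      · exact ⟨v, Or.inl rfl, u, Or.inr rfl, by rw [h]; exact hrefl v,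
          by rw [h]; exact fun h' => hvu (hsymm _ _ h')⟩
      · exact ⟨u, Or.inr rfl, v, Or.inl rfl, by rw [h]; exact hrefl u,
          by rw [h]; exact hvu⟩
    | succ n ih =>
      rintro w ⟨z, hz, z', hz', hzw, hz'w⟩
      exact ⟨z, ih hz, z', ih hz', hzw, hz'w⟩
  have monole : ∀ {n m : ℕ}, n ≤ m → Bfam E v u n ⊆ Bfam E v u m := by
    intro n m h
    induction h with
    | refl => exact fun _ h => h
    | step _ ih => exact fun x hx => mono _ (ih hx)
  refine ⟨mono, ?_, fun h => ⟨?_, ?_, h, ?_⟩⟩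
  · exact fun h => h.2.2.1
  · exact ⟨v, mem_iUnion.2 ⟨0, Or.inl rfl⟩, u, mem_iUnion.2 ⟨0, Or.inr rfl⟩, hvu⟩
  · intro b hb hK
    obtain ⟨n, hn⟩ := mem_iUnion.1 hb
    match n, hn with
    | 0, hn =>
      rcases hn with h | h
      · exact hvu (h ▸ hK u (mem_iUnion.2 ⟨0, Or.inr rfl⟩))
      · exact hvu (hsymm _ _ (h ▸ hK v (mem_iUnion.2 ⟨0, Or.inl rfl⟩)))
    | n + 1, hn =>
      obtain ⟨z, hz, z', hz', hzw, hz'w⟩ := hn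
      exact hz'w (hsymm _ _ (hK z' (mem_iUnion.2 ⟨n, hz'⟩)))
  · rintro b hb r ⟨hrB, hrK⟩ hEbr
    simp only [Kset, Set.mem_setOf_eq, not_forall] at hrK
    obtain ⟨b', hb', hrb'⟩ := hrK
    obtain ⟨n, hn⟩ := mem_iUnion.1 hb
    obtain ⟨m, hm⟩ := mem_iUnion.1 hb'
    exact hrB (mem_iUnion.2 ⟨max n m + 1,
      ⟨b, monole (le_max_left n m) hn, b', monole (le_max_right n m) hm,
        hEbr, fun h => hrb' (hsymm _ _ h)⟩⟩)
end

section
/- Let (V,E) be a connected interval graph with representation (L,<,f_L,f_R), and v,u ∈ V with ¬(v E u) and F(v) < F(u). Define B_n(v,u) and B(v,u) as in the standard construction, and for w ∈ B(v,u) let e_w be the least n with w ∈ B_n(v,u). If x,y ∈ B(v,u) satisfy F(u) < F(x) and f_L(x) ≤ f_L(y), then e_x ≤ e_y. -/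
open Set

variable {V : Type*}

theorem stmt13 {V : Type*} {L : Type} [LinearOrder L] (E : V → V → Prop)
    (hrefl : ∀ w, E w w) (hsymm : ∀ w w', E w w' → E w' w)
    (fL fR : V → L) (hrep : IsIntervalRep E fL fR) (hconn : Connected E)
    (v u : V) (hvu : ¬ E v u) (hord : fR v < fL u)
    (x y : V) (hx : x ∈ Bset E v u) (hy : y ∈ Bset E v u)
    (hux : fR u < fL x) (hxy : fL x ≤ fL y) :
    eLevel E v u x ≤ eLevel E v u y := by
  obtain ⟨hLR, hadj⟩ := hrep
  have huB : ∀ n, u ∈ Bfam E v u n ∧ v ∈ Bfam E v u n := by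
    intro n
    induction n with
    | zero => constructor <;> simp [Bfam]
    | succ n ih =>
      exact ⟨⟨u, ih.1, v, ih.2, hrefl u, hvu⟩,
        ⟨v, ih.2, u, ih.1, hrefl v, fun h => hvu (hsymm _ _ h)⟩⟩
  have main : ∀ n, ∀ w ∈ Bfam E v u n, fR u < fL w →
      ∀ x' ∈ Bset E v u, fR u < fL x' → fL x' ≤ fL w → eLevel E v u x' ≤ n := by
    intro n
    induction n with
    | zero =>
      intro w hw hw2 x' _ _ _
      rcases hw with h | h
      · subst h
        exact absurd hw2 (not_lt.2 (((hLR w).trans hord.le).trans (hLR u)))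
      · rcases h with rfl
        exact absurd hw2 (not_lt.2 (hLR _))
    | succ n ih =>
      intro w hw hwR x' hx' hx'R hx'w
      obtain ⟨z, hz, z', hz', hzw, hz'w⟩ := hw
      by_cases hzx : E z x'
      · have hmem : x' ∈ Bfam E v u (n + 1) :=
          ⟨z, hz, u, (huB n).1, hzx,
            fun h => absurd ((hadj u x').1 h).2 (not_le.2 hx'R)⟩
        exact Nat.sInf_le hmem
      · have h1 : fL w ≤ fR z := ((hadj z w).1 hzw).2
        have h2 : fR x' < fL z := by
          by_contra h
          exact hzx ((hadj z x').2 ⟨not_lt.1 h, hx'w.trans h1⟩)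
        have h3 : fR u < fL z := hx'R.trans_le ((hLR x').trans h2.le)
        exact (ih z hz h3 x' hx' hx'R ((hLR x').trans h2.le)).trans (Nat.le_succ n)
  have hyE : y ∈ Bfam E v u (eLevel E v u y) := by
    obtain ⟨m, hm⟩ := Set.mem_iUnion.1 hy
    exact Nat.sInf_mem (⟨m, hm⟩ : {n | y ∈ Bfam E v u n}.Nonempty)
  exact main _ y hyE (hux.trans_le hxy) x hx hux hxy
end

section
/- Let (V,E) be a connected interval graph with representation (L,<,f_L,f_R), and v,u ∈ V with ¬(v E u) and F(v) < F(u); define B_n(v,u), B(v,u), and e_w as usual. If w ∈ B(v,u) and F(w) is not entirely before F(u) (i.e., ¬(F(w) < F(u))), then there exists a path u E b₁ E ... E b_k E w with all b_i ∈ B(v,u) and e_{b_i} < e_w. -/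
open Set

variable {V : Type*}

theorem stmt14 {V : Type*} {L : Type} [LinearOrder L] (E : V → V → Prop)
    (hrefl : ∀ w, E w w) (hsymm : ∀ w w', E w w' → E w' w)
    (fL fR : V → L) (hrep : IsIntervalRep E fL fR) (hconn : Connected E)
    (v u : V) (hvu : ¬ E v u) (hord : fR v < fL u)
    (w : V) (hw : w ∈ Bset E v u) (hwu : ¬ fR w < fL u) :
    ∃ (k : ℕ) (p : ℕ → V), p 0 = u ∧ p (k + 1) = w ∧ IsPath E p (k + 1) ∧
      ∀ i, 1 ≤ i → i ≤ k →
        p i ∈ Bset E v u ∧ eLevel E v u (p i) < eLevel E v u w := by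
  obtain ⟨hle, hEiff⟩ := hrep
  suffices H : ∀ n, ∀ w, eLevel E v u w = n → w ∈ Bset E v u → ¬ fR w < fL u →
      ∃ (k : ℕ) (p : ℕ → V), p 0 = u ∧ p (k + 1) = w ∧ IsPath E p (k + 1) ∧
        ∀ i, 1 ≤ i → i ≤ k → p i ∈ Bset E v u ∧ eLevel E v u (p i) < eLevel E v u w from
    H _ w rfl hw hwu
  intro n
  induction n using Nat.strong_induction_on with
  | _ n ih =>
    intro w hwn hw hwu
    by_cases huw : E u w
    · refine ⟨0, fun i => if i = 0 then u else w, by simp, by simp, ?_, ?_⟩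
      · intro i hi
        have hi0 : i = 0 := by omega
        subst hi0; simpa using huw
      · intro i h1 h2; omega
    · have hwBe : w ∈ Bfam E v u (eLevel E v u w) := Nat.sInf_mem (by
        obtain ⟨s, hs⟩ := Set.mem_iUnion.1 hw
        exact ⟨s, hs⟩)
      rw [hwn] at hwBe
      have hn0 : n ≠ 0 := by
        rintro rfl
        rcases hwBe with h | h
        · rw [h] at hwu; exact hwu hord
        · rw [Set.mem_singleton_iff] at h; rw [h] at huw; exact huw (hrefl u)
      obtain ⟨m, rfl⟩ := Nat.exists_eq_succ_of_ne_zero hn0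
      obtain ⟨z, hzm, z', hz'm, hzw, hz'w⟩ := hwBe
      have huwle : fL u ≤ fR w := not_lt.1 hwu
      have hulw : fR u < fL w := by
        rw [hEiff] at huw
        push_neg at huw
        exact huw huwle
      have hzfR : ¬ fR z < fL u := by
        have h1 : fL w ≤ fR z := ((hEiff z w).1 hzw).2
        exact not_lt.2 (le_trans (le_trans (hle u) hulw.le) h1)
      have hzB : z ∈ Bset E v u := Set.mem_iUnion.2 ⟨m, hzm⟩
      have hzlev : eLevel E v u z ≤ m := Nat.sInf_le hzm
      obtain ⟨k, q, hq0, hqk, hqpath, hqmid⟩ :=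
        ih (eLevel E v u z) (by omega) z rfl hzB hzfR
      refine ⟨k + 1, fun i => if i ≤ k + 1 then q i else w, by simp [hq0],
        by simp, ?_, ?_⟩
      · intro i hi
        rcases lt_or_eq_of_le (Nat.lt_succ_iff.1 hi) with h | h
        · simp only [if_pos (by omega : i ≤ k + 1), if_pos (by omega : i + 1 ≤ k + 1)]
          exact hqpath i h
        · subst h
          simp only [if_pos le_rfl, if_neg (by omega : ¬ k + 1 + 1 ≤ k + 1), hqk]
          exact hzw
      · intro i h1 h2
        simp only [if_pos (by omega : i ≤ k + 1), hwn]
        rcases lt_or_eq_of_le h2 with h | h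
        · obtain ⟨hm1, hm2⟩ := hqmid i h1 (by omega)
          exact ⟨hm1, by omega⟩
        · subst h
          rw [hqk]
          exact ⟨hzB, by omega⟩
end

section
/- Let (V,E) be a connected interval graph with representation (L,<,f_L,f_R), v,u ∈ V with ¬(v E u) and F(v) < F(u), and B(v,u) the standard construction. If x,y ∈ B(v,u) satisfy f_R(x) ≤ f_R(v) and f_L(u) ≤ f_L(y), then (v,u) and (x,y) are connected by a Q-path in the graph (W,Q), where W = {(a,b) : ¬(a E b)} and (a,b) Q (c,d) iff a E c ∧ b E d. -/
open Set

variable {V : Type*}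

section Stmt15Aux
variable {V : Type*}

lemma qreach_refl (E : V → V → Prop) (p : V × V) (hp : p ∈ Wset E) : QReach E p p :=
  ⟨0, fun _ => p, rfl, rfl, fun _ _ => hp, fun i hi => absurd hi (Nat.not_lt_zero i)⟩

lemma qreach_snoc {E : V → V → Prop} {p q r : V × V} (h : QReach E p q)
    (hq : Qrel E q r) (hr : r ∈ Wset E) : QReach E p r := by
  obtain ⟨n, c, h0, hn, hw, hstep⟩ := h
  refine ⟨n + 1, fun i => if i ≤ n then c i else r, ?_, ?_, ?_, ?_⟩
  · show (if 0 ≤ n then c 0 else r) = p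
    rw [if_pos (Nat.zero_le n)]; exact h0
  · show (if n + 1 ≤ n then c (n+1) else r) = r
    rw [if_neg (by omega)]
  · intro i hi
    show (if i ≤ n then c i else r) ∈ Wset E
    by_cases hin : i ≤ n
    · rw [if_pos hin]; exact hw i hin
    · rw [if_neg hin]; exact hr
  · intro i hi
    have hi' : i ≤ n := Nat.lt_succ_iff.mp hi
    show Qrel E (if i ≤ n then c i else r) (if i + 1 ≤ n then c (i+1) else r)
    by_cases hin : i + 1 ≤ n
    · rw [if_pos hi', if_pos hin]; exact hstep i (by omega)
    · have : i = n := by omega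
      subst this
      rw [if_pos hi', if_neg hin, hn]; exact hq

lemma mem_bfam_zero_left {E : V → V → Prop} {v u : V} : v ∈ Bfam E v u 0 := by
  simp [Bfam]
lemma mem_bfam_zero_right {E : V → V → Prop} {v u : V} : u ∈ Bfam E v u 0 := by
  simp [Bfam]
lemma bfam_zero_cases {E : V → V → Prop} {v u w : V} (h : w ∈ Bfam E v u 0) :
    w = v ∨ w = u := by
  simpa [Bfam] using h
lemma bfam_succ_elim {E : V → V → Prop} {v u w : V} {n : ℕ} (h : w ∈ Bfam E v u (n+1)) :
    ∃ z ∈ Bfam E v u n, ∃ z' ∈ Bfam E v u n, E z w ∧ ¬ E z' w := h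
lemma bfam_mem_bset {E : V → V → Prop} {v u w : V} {n : ℕ} (h : w ∈ Bfam E v u n) :
    w ∈ Bset E v u := Set.mem_iUnion.mpr ⟨n, h⟩
lemma mem_bfam_eLevel {E : V → V → Prop} {v u w : V} (h : w ∈ Bset E v u) :
    w ∈ Bfam E v u (eLevel E v u w) := by
  obtain ⟨n, hn⟩ := Set.mem_iUnion.mp h
  have hne : {m | w ∈ Bfam E v u m}.Nonempty := ⟨n, hn⟩
  exact Nat.sInf_mem hne
lemma eLevel_le {E : V → V → Prop} {v u w : V} {n : ℕ} (h : w ∈ Bfam E v u n) :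
    eLevel E v u w ≤ n := Nat.sInf_le h

lemma stmt15_main {V : Type*} {L : Type} [LinearOrder L] (E : V → V → Prop)
    (hrefl : ∀ w, E w w) (hsymm : ∀ w w', E w w' → E w' w)
    (fL fR : V → L) (hLR : ∀ w, fL w ≤ fR w)
    (hE : ∀ a b, E a b ↔ fL a ≤ fR b ∧ fL b ≤ fR a)
    (v u : V) (hvu : ¬ E v u) (hord : fR v < fL u) :
    ∀ N x y, x ∈ Bset E v u → y ∈ Bset E v u → fR x ≤ fR v → fL u ≤ fL y →
      eLevel E v u x + eLevel E v u y ≤ N → QReach E (v, u) (x, y) := by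
  have hnE : ∀ a b : V, fR a < fL b → ¬ E a b := fun a b h hab =>
    absurd ((hE a b).mp hab).2 (not_le_of_gt h)
  have hcases : ∀ a b : V, ¬ E a b → fR a < fL b ∨ fR b < fL a := by
    intro a b hn
    by_cases h1 : fL a ≤ fR b
    · by_cases h2 : fL b ≤ fR a
      · exact absurd ((hE a b).mpr ⟨h1, h2⟩) hn
      · exact Or.inl (not_le.mp h2)
    · exact Or.inr (not_le.mp h1)
  have hEc : ∀ a b : V, fL a ≤ fR b → fL b ≤ fR a → E a b := fun a b h1 h2 =>
    (hE a b).mpr ⟨h1, h2⟩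
  have hvB : v ∈ Bset E v u := bfam_mem_bset mem_bfam_zero_left
  have huB : u ∈ Bset E v u := bfam_mem_bset mem_bfam_zero_right
  have hlv : eLevel E v u v = 0 := Nat.le_zero.mp (eLevel_le mem_bfam_zero_left)
  have hlu : eLevel E v u u = 0 := Nat.le_zero.mp (eLevel_le mem_bfam_zero_right)
  intro N
  induction N with
  | zero =>
    intro x y hx hy hxv huy hsum
    have hx0 : eLevel E v u x = 0 := by omega
    have hy0 : eLevel E v u y = 0 := by omega
    have hxmem := mem_bfam_eLevel hx; rw [hx0] at hxmem
    have hymem := mem_bfam_eLevel hy; rw [hy0] at hymem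
    rcases bfam_zero_cases hxmem with h | h
    · obtain rfl := h.symm
      rcases bfam_zero_cases hymem with h' | h'
      · obtain rfl := h'.symm
        exact absurd (le_trans huy (hLR v)) (not_le_of_gt hord)
      · obtain rfl := h'.symm
        exact qreach_refl E (v, u) hvu
    · obtain rfl := h.symm
      exact absurd (le_trans (hLR u) hxv) (not_le_of_gt hord)
  | succ N IH =>
    intro x y hx hy hxv huy hsum
    have hxy : ¬ E x y := hnE x y (lt_of_le_of_lt hxv (lt_of_lt_of_le hord huy))
    -- the nested induction handling "giant" intervals and descents
    have J : ∀ k : ℕ,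
        (∀ t, t ∈ Bset E v u → eLevel E v u t ≤ k → eLevel E v u t ≤ N →
          fL t ≤ fR x → fL y ≤ fR t → QReach E (v, u) (x, y)) ∧
        (∀ c, c ∈ Bset E v u → eLevel E v u c ≤ k → eLevel E v u c ≤ N →
          fR c < fL x → QReach E (v, u) (c, y) → QReach E (v, u) (x, y)) ∧
        (∀ c, c ∈ Bset E v u → eLevel E v u c ≤ k → eLevel E v u c ≤ N →
          fR y < fL c → QReach E (v, u) (x, c) → QReach E (v, u) (x, y)) := by
      intro k
      induction k with
      | zero =>
        refine ⟨?_, ?_, ?_⟩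
        · intro t htB htk _ h1 h2
          have h0 : eLevel E v u t = 0 := by omega
          have htmem := mem_bfam_eLevel htB; rw [h0] at htmem
          rcases bfam_zero_cases htmem with h | h
          · obtain rfl := h.symm
            exact absurd (le_trans huy h2) (not_le_of_gt hord)
          · obtain rfl := h.symm
            exact absurd (le_trans h1 hxv) (not_le_of_gt hord)
        · intro c hcB hck _ hcx _
          have h0 : eLevel E v u c = 0 := by omega
          have hcmem := mem_bfam_eLevel hcB; rw [h0] at hcmem
          rcases bfam_zero_cases hcmem with h | h
          · obtain rfl := h.symm
            exact absurd (le_trans (hLR x) hxv) (not_le_of_gt hcx)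
          · obtain rfl := h.symm
            exact absurd hcx (not_lt_of_ge (le_trans (hLR x)
              (le_trans hxv (le_of_lt (lt_of_lt_of_le hord (hLR u))))))
        · intro c hcB hck _ hyc _
          have h0 : eLevel E v u c = 0 := by omega
          have hcmem := mem_bfam_eLevel hcB; rw [h0] at hcmem
          rcases bfam_zero_cases hcmem with h | h
          · obtain rfl := h.symm
            exact absurd hyc (not_lt_of_ge (le_trans (hLR v)
              (le_of_lt (lt_of_lt_of_le hord (le_trans huy (hLR y))))))
          · obtain rfl := h.symm
            exact absurd hyc (not_lt_of_ge (le_trans huy (hLR y)))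
      | succ k IHk =>
        refine ⟨?_, ?_, ?_⟩
        · -- AUX : giants
          intro t htB htk htN h1 h2
          have hEtx : E t x := hEc t x h1 (le_trans (hLR x) (le_trans hxv
            (le_of_lt (lt_of_lt_of_le hord (le_trans huy h2)))))
          have hEty : E t y := hEc t y (le_trans h1 (le_trans hxv
            (le_of_lt (lt_of_lt_of_le hord (le_trans huy (hLR y)))))) h2
          have htpos : eLevel E v u t ≠ 0 := by
            intro h0
            have htmem := mem_bfam_eLevel htB; rw [h0] at htmem
            rcases bfam_zero_cases htmem with h | h
            · obtain rfl := h.symm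
              exact absurd (le_trans huy h2) (not_le_of_gt hord)
            · obtain rfl := h.symm
              exact absurd (le_trans h1 hxv) (not_le_of_gt hord)
          obtain ⟨l, hl⟩ : ∃ l, eLevel E v u t = l + 1 :=
            ⟨eLevel E v u t - 1, by omega⟩
          have htmem := mem_bfam_eLevel htB; rw [hl] at htmem
          obtain ⟨z, hz, s', hs', hzt, hs't⟩ := bfam_succ_elim htmem
          have hs'B : s' ∈ Bset E v u := bfam_mem_bset hs'
          have hs'l : eLevel E v u s' ≤ l := eLevel_le hs'
          rcases hcases s' t hs't with hlt | hrt
          · -- s' strictly to the left of t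
            have hs'v : fR s' ≤ fR v := le_of_lt (lt_of_lt_of_le hlt (le_trans h1 hxv))
            have hM : QReach E (v, u) (s', u) :=
              IH s' u hs'B huB hs'v le_rfl (by rw [hlu]; omega)
            have hEut : E u t := hEc u t (le_trans huy h2)
              (le_trans h1 (le_trans hxv (le_of_lt (lt_of_lt_of_le hord (hLR u)))))
            have hst : QReach E (v, u) (s', t) := qreach_snoc hM ⟨hrefl s', hEut⟩ hs't
            by_cases hs'x : E s' x
            · exact qreach_snoc hst ⟨hs'x, hEty⟩ hxy
            · have hs'lx : fR s' < fL x := by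
                rcases hcases s' x hs'x with h | h
                · exact h
                · exact absurd (le_trans (hLR s') (le_of_lt (lt_of_lt_of_le hlt h1)))
                    (not_le_of_gt h)
              have hs'y : QReach E (v, u) (s', y) := qreach_snoc hst ⟨hrefl s', hEty⟩
                (hnE s' y (lt_of_lt_of_le hlt (le_trans h1 (le_trans hxv
                  (le_of_lt (lt_of_lt_of_le hord huy))))))
              exact IHk.2.1 s' hs'B (by omega) (by omega) hs'lx hs'y
          · -- s' strictly to the right of t
            have hβs' : fL u ≤ fL s' := le_trans huy (le_of_lt (lt_of_le_of_lt h2 hrt))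
            have hM : QReach E (v, u) (v, s') :=
              IH v s' hvB hs'B le_rfl hβs' (by rw [hlv]; omega)
            have hEvt : E v t := hEc v t (le_trans (hLR v)
              (le_of_lt (lt_of_lt_of_le hord (le_trans huy h2)))) (le_trans h1 hxv)
            have hts' : QReach E (v, u) (t, s') :=
              qreach_snoc hM ⟨hEvt, hrefl s'⟩ (fun h => hs't (hsymm t s' h))
            by_cases hs'y : E s' y
            · exact qreach_snoc hts' ⟨hEtx, hs'y⟩ hxy
            · have hys' : fR y < fL s' := by
                rcases hcases s' y hs'y with h | h
                · exact absurd (lt_of_le_of_lt h2 (lt_of_lt_of_le hrt (hLR s')))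
                    (not_lt_of_gt h)
                · exact h
              have hxs' : QReach E (v, u) (x, s') := qreach_snoc hts' ⟨hEtx, hrefl s'⟩
                (hnE x s' (lt_of_le_of_lt hxv (lt_of_lt_of_le hord (le_trans huy
                  (le_of_lt (lt_of_le_of_lt h2 hrt))))))
              exact IHk.2.2 s' hs'B (by omega) (by omega) hys' hxs'
        · -- LD : left descent
          intro c hcB hck hcN hcx hQ
          have hcpos : eLevel E v u c ≠ 0 := by
            intro h0
            have hcmem := mem_bfam_eLevel hcB; rw [h0] at hcmem
            rcases bfam_zero_cases hcmem with h | h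
            · obtain rfl := h.symm
              exact absurd (le_trans (hLR x) hxv) (not_le_of_gt hcx)
            · obtain rfl := h.symm
              exact absurd hcx (not_lt_of_ge (le_trans (hLR x)
                (le_trans hxv (le_of_lt (lt_of_lt_of_le hord (hLR u))))))
          obtain ⟨k', hk'⟩ : ∃ k', eLevel E v u c = k' + 1 :=
            ⟨eLevel E v u c - 1, by omega⟩
          have hcmem := mem_bfam_eLevel hcB; rw [hk'] at hcmem
          obtain ⟨d, hd, -, -, hdc, -⟩ := bfam_succ_elim hcmem
          have hdB : d ∈ Bset E v u := bfam_mem_bset hd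
          have hdl : eLevel E v u d ≤ k' := eLevel_le hd
          have hdc' := (hE d c).mp hdc
          by_cases hdy : fL y ≤ fR d
          · exact IHk.1 d hdB (by omega) (by omega)
              (le_trans (le_of_lt (lt_of_le_of_lt hdc'.1 hcx)) (hLR x)) hdy
          · have h1 : QReach E (v, u) (d, y) :=
              qreach_snoc hQ ⟨hsymm d c hdc, hrefl y⟩ (hnE d y (not_le.mp hdy))
            by_cases hdx : E d x
            · exact qreach_snoc h1 ⟨hdx, hrefl y⟩ hxy
            · have hdlx : fR d < fL x := by
                rcases hcases d x hdx with h | h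
                · exact h
                · exact absurd (le_trans hdc'.1 (le_of_lt (lt_of_lt_of_le hcx (hLR x))))
                    (not_le_of_gt h)
              exact IHk.2.1 d hdB (by omega) (by omega) hdlx h1
        · -- RD : right descent
          intro c hcB hck hcN hyc hQ
          have hcpos : eLevel E v u c ≠ 0 := by
            intro h0
            have hcmem := mem_bfam_eLevel hcB; rw [h0] at hcmem
            rcases bfam_zero_cases hcmem with h | h
            · obtain rfl := h.symm
              exact absurd hyc (not_lt_of_ge (le_trans (hLR v)
                (le_of_lt (lt_of_lt_of_le hord (le_trans huy (hLR y))))))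
            · obtain rfl := h.symm
              exact absurd hyc (not_lt_of_ge (le_trans huy (hLR y)))
          obtain ⟨k', hk'⟩ : ∃ k', eLevel E v u c = k' + 1 :=
            ⟨eLevel E v u c - 1, by omega⟩
          have hcmem := mem_bfam_eLevel hcB; rw [hk'] at hcmem
          obtain ⟨d, hd, -, -, hdc, -⟩ := bfam_succ_elim hcmem
          have hdB : d ∈ Bset E v u := bfam_mem_bset hd
          have hdl : eLevel E v u d ≤ k' := eLevel_le hd
          have hdc' := (hE d c).mp hdc
          by_cases hdx : fL d ≤ fR x
          · exact IHk.1 d hdB (by omega) (by omega) hdx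
              (le_trans (hLR y) (le_of_lt (lt_of_lt_of_le hyc hdc'.2)))
          · have h1 : QReach E (v, u) (x, d) :=
              qreach_snoc hQ ⟨hrefl x, hsymm d c hdc⟩ (hnE x d (not_le.mp hdx))
            by_cases hdy : E d y
            · exact qreach_snoc h1 ⟨hrefl x, hdy⟩ hxy
            · have hydl : fR y < fL d := by
                rcases hcases d y hdy with h | h
                · exact absurd h (not_lt_of_ge (le_trans (hLR y)
                    (le_of_lt (lt_of_lt_of_le hyc hdc'.2))))
                · exact h
              exact IHk.2.2 d hdB (by omega) (by omega) hydl h1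
    -- main case analysis
    rcases Nat.eq_zero_or_pos (eLevel E v u x) with hx0 | hxpos
    · have hxmem := mem_bfam_eLevel hx; rw [hx0] at hxmem
      have hxv' : v = x := by
        rcases bfam_zero_cases hxmem with h | h
        · exact h.symm
        · exact absurd (le_trans (hLR u) (h ▸ hxv)) (not_le_of_gt hord)
      obtain rfl := hxv'
      rcases Nat.eq_zero_or_pos (eLevel E v u y) with hy0 | hypos
      · have hymem := mem_bfam_eLevel hy; rw [hy0] at hymem
        rcases bfam_zero_cases hymem with h | h
        · obtain rfl := h.symm
          exact absurd (le_trans huy (hLR v)) (not_le_of_gt hord)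
        · obtain rfl := h.symm
          exact qreach_refl E (v, u) hvu
      · obtain ⟨m, hm⟩ : ∃ m, eLevel E v u y = m + 1 :=
          ⟨eLevel E v u y - 1, by omega⟩
        have hymem := mem_bfam_eLevel hy; rw [hm] at hymem
        obtain ⟨t, ht, -, -, hty, -⟩ := bfam_succ_elim hymem
        have htB : t ∈ Bset E v u := bfam_mem_bset ht
        have htl : eLevel E v u t ≤ m := eLevel_le ht
        have hty' := (hE t y).mp hty
        by_cases hβt : fL u ≤ fL t
        · have h1 : QReach E (v, u) (v, t) :=
            IH v t hvB htB le_rfl hβt (by rw [hlv]; omega)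
          exact qreach_snoc h1 ⟨hrefl v, hty⟩ hxy
        · by_cases hxt : fR v < fL t
          · have h0 : QReach E (v, u) (v, u) := qreach_refl E (v, u) hvu
            have hEut : E u t := hEc u t (le_trans huy hty'.2)
              (le_of_lt (lt_of_lt_of_le (not_le.mp hβt) (hLR u)))
            have h1 : QReach E (v, u) (v, t) :=
              qreach_snoc h0 ⟨hrefl v, hEut⟩ (hnE v t hxt)
            exact qreach_snoc h1 ⟨hrefl v, hty⟩ hxy
          · exact (J (eLevel E v u t)).1 t htB le_rfl (by omega)
              (not_lt.mp hxt) hty'.2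
    · obtain ⟨n, hn⟩ : ∃ n, eLevel E v u x = n + 1 :=
        ⟨eLevel E v u x - 1, by omega⟩
      have hxmem := mem_bfam_eLevel hx; rw [hn] at hxmem
      obtain ⟨z, hz, -, -, hzx, -⟩ := bfam_succ_elim hxmem
      have hzB : z ∈ Bset E v u := bfam_mem_bset hz
      have hzl : eLevel E v u z ≤ n := eLevel_le hz
      have hzx' := (hE z x).mp hzx
      by_cases hzy : fR z < fL y
      · by_cases hzα : fR z ≤ fR v
        · have h1 : QReach E (v, u) (z, y) := IH z y hzB hy hzα huy (by omega)
          exact qreach_snoc h1 ⟨hzx, hrefl y⟩ hxy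
        · have h1 : QReach E (v, u) (v, y) :=
            IH v y hvB hy le_rfl huy (by rw [hlv]; omega)
          have hEvz : E v z := hEc v z (le_trans (hLR v) (le_of_lt (not_le.mp hzα)))
            (le_trans hzx'.1 hxv)
          have h2 : QReach E (v, u) (z, y) :=
            qreach_snoc h1 ⟨hEvz, hrefl y⟩ (hnE z y hzy)
          exact qreach_snoc h2 ⟨hzx, hrefl y⟩ hxy
      · exact (J (eLevel E v u z)).1 z hzB le_rfl (by omega) hzx'.1 (not_lt.mp hzy)
end Stmt15Aux

theorem stmt15 {V : Type*} {L : Type} [LinearOrder L] (E : V → V → Prop)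
    (hrefl : ∀ w, E w w) (hsymm : ∀ w w', E w w' → E w' w)
    (fL fR : V → L) (hrep : IsIntervalRep E fL fR) (hconn : Connected E)
    (v u : V) (hvu : ¬ E v u) (hord : fR v < fL u)
    (x y : V) (hx : x ∈ Bset E v u) (hy : y ∈ Bset E v u)
    (hxv : fR x ≤ fR v) (huy : fL u ≤ fL y) :
    QReach E (v, u) (x, y) := by
  obtain ⟨hLR, hE⟩ := hrep
  exact stmt15_main E hrefl hsymm fL fR hLR hE v u hvu hord
    (eLevel E v u x + eLevel E v u y) x y hx hy hxv huy le_rfl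
end

section
/- Let (V,E) be an interval graph with representation F over a linear order, ≺ a partial order associated to (V,E), and suppose (a,b),(c,d) ∈ W with (a,b) Q (c,d), i.e., a E c and b E d. Then b E c and a E d cannot both hold; moreover, if a ≺ b then c ≺ d. -/
open Set

variable {V : Type*}

theorem stmt19 {V : Type*} (E : V → V → Prop) (hIG : IsIntervalGraph E)
    (r : V → V → Prop) (hr : IsAssociated E r) (a b c d : V)
    (hab : ¬ E a b) (hcd : ¬ E c d) (hQ : Qrel E (a, b) (c, d)) :
    ¬ (E b c ∧ E a d) ∧ (r a b → r c d) := by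
  obtain ⟨hrefl, hsym, L, _, fL, fR, hle, hrep⟩ := hIG
  obtain ⟨hac, hbd⟩ := hQ
  simp only at hac hbd
  have key : ¬ (E b c ∧ E a d) := by
    rintro ⟨hbc, had⟩
    rw [hrep] at hac hbd hbc had
    have hab' : ¬ (fL a ≤ fR b ∧ fL b ≤ fR a) := fun h => hab ((hrep a b).2 h)
    have hcd' : ¬ (fL c ≤ fR d ∧ fL d ≤ fR c) := fun h => hcd ((hrep c d).2 h)
    rcases not_and_or.1 hab' with h | h <;> push_neg at h <;>
      rcases not_and_or.1 hcd' with h2 | h2 <;> push_neg at h2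
    · exact lt_irrefl (fL a) (calc fL a ≤ fR d := had.1
        _ < fL c := h2
        _ ≤ fR b := hbc.2
        _ < fL a := h)
    · exact lt_irrefl (fL a) (calc fL a ≤ fR c := hac.1
        _ < fL d := h2
        _ ≤ fR b := hbd.2
        _ < fL a := h)
    · exact lt_irrefl (fL b) (calc fL b ≤ fR d := hbd.1
        _ < fL c := h2
        _ ≤ fR a := hac.2
        _ < fL b := h)
    · exact lt_irrefl (fL b) (calc fL b ≤ fR c := hbc.1
        _ < fL d := h2
        _ ≤ fR a := had.2
        _ < fL b := h)
  refine ⟨key, fun hrab => ?_⟩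
  obtain ⟨hirr, htrans, hassoc⟩ := hr
  rcases (hassoc c d).1 hcd with h | hdc
  · exact h
  exfalso
  rcases not_and_or.1 key with hnbc | hnad
  · rcases (hassoc b c).1 hnbc with hbcr | hcbr
    · exact (hassoc a c).2 (Or.inl (htrans _ _ _ hrab hbcr)) hac
    · exact (hassoc d b).2 (Or.inl (htrans _ _ _ hdc hcbr)) (hsym _ _ hbd)
  · rcases (hassoc a d).1 hnad with hadr | hdar
    · exact (hassoc a c).2 (Or.inl (htrans _ _ _ hadr hdc)) hac
    · exact (hassoc d b).2 (Or.inl (htrans _ _ _ hdar hrab)) (hsym _ _ hbd)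
end
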